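/- arXiv:2209.03251 — 8 statements merged into one kernel-verified Lean document; each statement's English description precedes it below -/
import Mathlib

section
/- Let F be a field, let n ≥ 2, and let ω_1, …, ω_n be pairwise distinct elements of F. For each i set λ_i = (∏_{j≠i} (ω_i − ω_j))^{-1}. Then for every integer k with 1 ≤ k ≤ n and all polynomials f, r ∈ F[x] with deg f ≤ k − 1 and deg r ≤ n − k − 1, one has ∑_{i=1}^n λ_i · f(ω_i) · r(ω_i) = 0. (Equivalently, the vectors (λ_1 r(ω_1), …, λ_n r(ω_n)) with deg r ≤ n − k − 1 are orthogonal to the Reed–Solomon code RS({ω_1,…,ω_n}, k), i.e., the dual of a Reed–Solomon code is a generalized Reed–Solomon code with multipliers λ_i.) -/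
open Finset Polynomial

/-- The dual of a Reed–Solomon code is a generalized Reed–Solomon code:
for pairwise distinct evaluation points `ω 1, …, ω n`, multipliers
`λ i = (∏_{j ≠ i} (ω i - ω j))⁻¹`, every `f` of degree `≤ k - 1` and every
`r` of degree `≤ n - k - 1`, we have `∑ i, λ i * f (ω i) * r (ω i) = 0`. -/
theorem dual_of_RS_is_GRS {F : Type*} [Field F] (n : ℕ) (hn : 2 ≤ n)
    (ω : Fin n → F) (hω : Function.Injective ω)
    (k : ℕ) (hk1 : 1 ≤ k) (hkn : k ≤ n)
    (f r : Polynomial F)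
    (hf : f.degree < (k : WithBot ℕ))
    (hr : r.degree < ((n - k : ℕ) : WithBot ℕ)) :
    ∑ i : Fin n,
      (∏ j ∈ Finset.univ.erase i, (ω i - ω j))⁻¹ * f.eval (ω i) * r.eval (ω i) = 0 := by
  rcases eq_or_ne f 0 with rfl | hf0
  · simp
  rcases eq_or_ne r 0 with rfl | hr0
  · simp
  set g : Polynomial F := f * r with hg
  have hg0 : g ≠ 0 := mul_ne_zero hf0 hr0
  have hnk : 1 ≤ n - k := by
    by_contra h
    push_neg at h
    interval_cases h' : n - k
    · simp at hr
      exact hr0 (by simpa [degree_eq_bot] using hr)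
  have hdf : f.natDegree ≤ k - 1 := by
    have := (degree_eq_natDegree hf0) ▸ hf
    exact Nat.le_sub_one_of_lt (by exact_mod_cast this)
  have hdr : r.natDegree ≤ n - k - 1 := by
    have := (degree_eq_natDegree hr0) ▸ hr
    exact Nat.le_sub_one_of_lt (by exact_mod_cast this)
  have hdg : g.natDegree ≤ n - 2 := by
    calc g.natDegree ≤ f.natDegree + r.natDegree := natDegree_mul_le
    _ ≤ (k - 1) + (n - k - 1) := add_le_add hdf hdr
    _ ≤ n - 2 := by omega
  have hcard : #(Finset.univ : Finset (Fin n)) = n := by simp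
  have hinj : Set.InjOn ω (Finset.univ : Finset (Fin n)) := hω.injOn
  have hdeglt : g.degree < (#(Finset.univ : Finset (Fin n)) : WithBot ℕ) := by
    rw [hcard, degree_eq_natDegree hg0]
    exact_mod_cast lt_of_le_of_lt hdg (by omega)
  have hinterp := Lagrange.eq_interpolate hinj hdeglt
  have hcoeff := congrArg (fun p => p.coeff (n - 1)) hinterp
  simp only [Lagrange.interpolate_apply, finset_sum_coeff, coeff_C_mul] at hcoeff
  have hgz : g.coeff (n - 1) = 0 :=
    coeff_eq_zero_of_natDegree_lt (lt_of_le_of_lt hdg (by omega))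
  rw [hgz] at hcoeff
  have hbasis : ∀ i : Fin n, (Lagrange.basis Finset.univ ω i).coeff (n - 1)
      = (∏ j ∈ Finset.univ.erase i, (ω i - ω j))⁻¹ := by
    intro i
    have hnd : (Lagrange.basis Finset.univ ω i).natDegree = n - 1 := by
      rw [Lagrange.natDegree_basis hinj (mem_univ i), hcard]
    rw [← hnd, ← leadingCoeff, Lagrange.basis, leadingCoeff_prod, ← prod_inv_distrib]
    refine prod_congr rfl fun j hj => ?_
    have hij : ω i ≠ ω j := fun h => (mem_erase.mp hj).1.symm (hω h)
    rw [Lagrange.basisDivisor, leadingCoeff_mul, leadingCoeff_C, leadingCoeff_X_sub_C, mul_one]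
  calc ∑ i : Fin n, (∏ j ∈ Finset.univ.erase i, (ω i - ω j))⁻¹ * f.eval (ω i) * r.eval (ω i)
      = ∑ i : Fin n, g.eval (ω i) * (Lagrange.basis Finset.univ ω i).coeff (n - 1) := by
        refine sum_congr rfl fun i _ => ?_
        rw [hbasis i, hg, eval_mul]; ring
    _ = 0 := hcoeff.symm
end

section
/- Let B be a finite field with q = |B| elements and let F be a field extension of B of degree t, with trace map Tr : F → B, Tr(x) = ∑_{i=0}^{t−1} x^{q^i}. Let ℓ, d, k be positive integers with ℓ ≤ k ≤ ℓ + d and d ≥ ℓ·q^{t−1} − ℓ + k. Let β_1, …, β_ℓ, α_1, …, α_d be ℓ + d pairwise distinct elements of F and let κ_1, …, κ_ℓ ∈ F be nonzero. For each point ω among these n = ℓ + d points, let λ(ω) = (∏_{ω' ≠ ω} (ω − ω'))^{-1}, the product running over the other n − 1 points. Define g(x) = ∑_{j=1}^ℓ (κ_j / λ(β_j)) · ∏_{m≠j}(x − β_m) / ∏_{m≠j}(β_j − β_m). Then for every polynomial f ∈ F[x] with deg f ≤ k − 1 and every u ∈ F: Tr(u · ∑_{j=1}^ℓ κ_j f(β_j))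 = − ∑_{j=1}^d Tr(u · ∏_{m=1}^ℓ (α_j − β_m)) · Tr( g(α_j) · λ(α_j) · f(α_j) / ∏_{m=1}^ℓ (α_j − β_m) ). -/
open Finset Polynomial

/-- The trace polynomial map `x ↦ ∑_{i=0}^{t-1} x^{q^i}` (viewed as a map `F → F`). -/
noncomputable def traceFun {F : Type*} [Field F] (q t : ℕ) (x : F) : F :=
  ∑ i ∈ Finset.range t, x ^ q ^ i

/-- The dual-GRS multiplier `λ(ω) = (∏_{ω' ≠ ω} (ω - ω'))⁻¹` attached to each of the
`ℓ + d` evaluation points `β 1, …, β ℓ, α 1, …, α d` (indexed by `Fin ℓ ⊕ Fin d`). -/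
noncomputable def lamPt {F : Type*} [Field F] {ℓ d : ℕ}
    (β : Fin ℓ → F) (α : Fin d → F) (i : Fin ℓ ⊕ Fin d) : F :=
  (∏ j ∈ Finset.univ.erase i, (Sum.elim β α i - Sum.elim β α j))⁻¹

/-- The polynomial map `g(x) = ∑_j (κ_j / λ(β_j)) ∏_{m ≠ j}(x - β_m) / ∏_{m ≠ j}(β_j - β_m)`. -/
noncomputable def gFun {F : Type*} [Field F] {ℓ d : ℕ}
    (β : Fin ℓ → F) (α : Fin d → F) (κ : Fin ℓ → F) (x : F) : F :=
  ∑ j : Fin ℓ, (κ j / lamPt β α (Sum.inl j)) *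
    (∏ m ∈ Finset.univ.erase j, (x - β m)) / (∏ m ∈ Finset.univ.erase j, (β j - β m))

/-- Orthogonality of the dual GRS multipliers: for any polynomial of degree `< n - 1`,
the weighted sum of its values at the `n` nodes vanishes. -/
lemma dualRS {F : Type*} [Field F] {ι : Type*} [Fintype ι] [DecidableEq ι]
    (v : ι → F) (hv : Function.Injective v) (h : F[X])
    (hdeg : h.degree < ((Fintype.card ι - 1 : ℕ) : WithBot ℕ)) :
    ∑ i : ι, (∏ j ∈ Finset.univ.erase i, (v i - v j))⁻¹ * h.eval (v i) = 0 := by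
  rcases Nat.eq_zero_or_pos (Fintype.card ι) with hc | hc
  · have : (Finset.univ : Finset ι) = ∅ := Finset.card_eq_zero.mp (by simpa using hc)
    simp [this]
  set n := Fintype.card ι with hn
  have hvs : Set.InjOn v (Finset.univ : Finset ι) := fun a _ b _ hab => hv hab
  have hcard : (Finset.univ : Finset ι).card = n := by simp [hn]
  have hdeg' : h.degree < ((Finset.univ : Finset ι).card : WithBot ℕ) := by
    rw [hcard]
    exact lt_of_lt_of_le hdeg (by exact_mod_cast Nat.sub_le n 1)
  have hinterp := Lagrange.eq_interpolate hvs hdeg'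
  have hco : h.coeff (n - 1) = 0 :=
    Polynomial.coeff_eq_zero_of_degree_lt (by exact_mod_cast hdeg)
  rw [hinterp, Lagrange.interpolate_apply, Polynomial.finset_sum_coeff] at hco
  have key : ∀ i : ι, (Polynomial.C (h.eval (v i)) * Lagrange.basis Finset.univ v i).coeff (n - 1)
      = (∏ j ∈ Finset.univ.erase i, (v i - v j))⁻¹ * h.eval (v i) := by
    intro i
    have hb : Lagrange.basis Finset.univ v i =
        Polynomial.C (Lagrange.nodalWeight Finset.univ v i) *
          Lagrange.nodal (Finset.univ.erase i) v := by
      rw [Lagrange.basis_eq_prod_sub_inv_mul_nodal_div (Finset.mem_univ i),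
        Lagrange.nodal_erase_eq_nodal_div (Finset.mem_univ i)]
    have hmono : (Lagrange.nodal (Finset.univ.erase i) v).Monic := Lagrange.nodal_monic
    have hnd : (Lagrange.nodal (Finset.univ.erase i) v).natDegree = n - 1 := by
      rw [Lagrange.natDegree_nodal, Finset.card_erase_of_mem (Finset.mem_univ i), hcard]
    have hc1 : (Lagrange.nodal (Finset.univ.erase i) v).coeff (n - 1) = 1 := by
      rw [← hnd]; exact hmono.coeff_natDegree
    rw [hb, ← mul_assoc, ← Polynomial.C_mul, Polynomial.coeff_C_mul, hc1, mul_one,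
      Lagrange.nodalWeight, ← Finset.prod_inv_distrib]
    ring
  rw [Finset.sum_congr rfl (fun i _ => key i)] at hco
  exact hco

section TraceLemmas
variable {F : Type*} [Field F] {p m t : ℕ} [Fact p.Prime] [CharP F p]

lemma traceFun_add (a b : F) :
    traceFun (p ^ m) t (a + b) = traceFun (p ^ m) t a + traceFun (p ^ m) t b := by
  unfold traceFun
  rw [← Finset.sum_add_distrib]
  refine Finset.sum_congr rfl fun i _ => ?_
  rw [← pow_mul]
  exact add_pow_char_pow a b p (m * i)

lemma traceFun_zero (q t : ℕ) (hq : 0 < q) : traceFun (F := F) q t 0 = 0 :=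
  Finset.sum_eq_zero fun i _ => zero_pow (pow_pos hq i).ne'

lemma traceFun_neg (a : F) :
    traceFun (p ^ m) t (-a) = - traceFun (p ^ m) t a := by
  have h := traceFun_add (p := p) (m := m) (t := t) (-a) a
  rw [neg_add_cancel, traceFun_zero _ _ (pow_pos (Fact.out : p.Prime).pos m)] at h
  exact eq_neg_of_add_eq_zero_left h.symm

lemma traceFun_sum {ι : Type*} (s : Finset ι) (g : ι → F) :
    traceFun (p ^ m) t (∑ i ∈ s, g i) = ∑ i ∈ s, traceFun (p ^ m) t (g i) := by
  induction s using Finset.cons_induction with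
  | empty => simpa using traceFun_zero (F := F) (p ^ m) t (pow_pos (Fact.out : p.Prime).pos m)
  | cons a s ha ih => rw [Finset.sum_cons, Finset.sum_cons, traceFun_add, ih]

lemma traceFun_smul {q : ℕ} (t : ℕ) {s : F} (hs : s ^ q = s) (x : F) :
    traceFun q t (s * x) = s * traceFun q t x := by
  have hpow : ∀ i : ℕ, s ^ q ^ i = s := fun i => by
    induction i with
    | zero => simp
    | succ n ih => rw [pow_succ, pow_mul, ih, hs]
  unfold traceFun
  rw [Finset.mul_sum]
  exact Finset.sum_congr rfl fun i _ => by rw [mul_pow, hpow]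

lemma traceFun_fixed (hq : ∀ y : F, y ^ (p ^ m) ^ t = y) (x : F) :
    (traceFun (p ^ m) t x) ^ (p ^ m) = traceFun (p ^ m) t x := by
  unfold traceFun
  cases t with
  | zero =>
    show ((0:F)) ^ p ^ m = 0
    exact zero_pow (pow_ne_zero m (Fact.out : p.Prime).ne_zero)
  | succ n =>
    have hring : (∑ i ∈ Finset.range (n + 1), x ^ (p ^ m) ^ i) ^ p ^ m =
        ∑ i ∈ Finset.range (n + 1), (x ^ (p ^ m) ^ i) ^ p ^ m := by
      rw [show ∀ y : F, y ^ p ^ m = iterateFrobenius F p m y from fun y => rfl]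
      exact map_sum _ _ _
    rw [hring]
    have : ∀ i, (x ^ (p ^ m) ^ i) ^ p ^ m = x ^ (p ^ m) ^ (i + 1) := fun i => by
      rw [← pow_mul, ← pow_succ]
    simp_rw [this]
    have e1 := Finset.sum_range_succ' (fun i => x ^ (p ^ m) ^ i) (n + 1)
    have e2 := Finset.sum_range_succ (fun i => x ^ (p ^ m) ^ i) (n + 1)
    simp only [pow_zero, pow_one] at e1
    rw [hq x] at e2
    exact add_right_cancel (e1.symm.trans e2)

end TraceLemmas

/-- Correctness of Scheme 1 (trace-polynomial based evaluation of a weighted sum of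
Reed–Solomon coded symbols): for all `f` with `deg f ≤ k - 1` and all `u ∈ F`,
`Tr(u ∑_j κ_j f(β_j)) = - ∑_j Tr(u ∏_m (α_j - β_m)) Tr(g(α_j) λ(α_j) f(α_j) / ∏_m (α_j - β_m))`. -/
theorem scheme1_trace_identity {B F : Type*} [Field B] [Fintype B] [Field F] [Algebra B F]
    (t : ℕ) (ht : Module.finrank B F = t)
    (ℓ d k : ℕ) (hℓ : 0 < ℓ) (hd : 0 < d) (hk : 0 < k)
    (hℓk : ℓ ≤ k) (hkℓd : k ≤ ℓ + d)
    (hdbig : ℓ * Fintype.card B ^ (t - 1) - ℓ + k ≤ d)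
    (β : Fin ℓ → F) (α : Fin d → F)
    (hinj : Function.Injective (Sum.elim β α))
    (κ : Fin ℓ → F) (hκ : ∀ i, κ i ≠ 0)
    (f : Polynomial F) (hf : f.degree < (k : WithBot ℕ)) (u : F) :
    traceFun (Fintype.card B) t (u * ∑ j, κ j * f.eval (β j)) =
      - ∑ j : Fin d,
          traceFun (Fintype.card B) t (u * ∏ m, (α j - β m)) *
          traceFun (Fintype.card B) t
            (gFun β α κ (α j) * lamPt β α (Sum.inr j) * f.eval (α j) /
              ∏ m, (α j - β m)) := by
  -- trivial case `t = 0`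
  rcases Nat.eq_zero_or_pos t with ht0 | htpos
  · subst ht0; simp [traceFun]
  -- set-up: `F` is a finite field of cardinality `q ^ t`
  set q := Fintype.card B with hqdef
  haveI : Module.Finite B F := Module.finite_of_finrank_pos (ht ▸ htpos)
  haveI : Finite F := Module.finite_iff_finite.mp ‹_›
  haveI : Fintype F := Fintype.ofFinite F
  have hcardF : Fintype.card F = q ^ t := by rw [← ht]; exact Module.card_eq_pow_finrank
  have hq2 : 2 ≤ q := Fintype.one_lt_card
  set p := ringChar B with hpdef
  haveI hpB : CharP B p := ringChar.charP B
  have hpprime : p.Prime := CharP.char_is_prime B p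
  haveI : Fact p.Prime := ⟨hpprime⟩
  haveI : CharP F p := charP_of_injective_algebraMap (algebraMap B F).injective p
  obtain ⟨m, -, hq⟩ := FiniteField.card B p
  set M := (m : ℕ) with hMdef
  have hqpm : q = p ^ M := hq
  -- injectivity facts
  set v : Fin ℓ ⊕ Fin d → F := Sum.elim β α with hvdef
  have hβinj : Function.Injective β := fun a b hab => by
    have := hinj (show v (Sum.inl a) = v (Sum.inl b) from hab)
    exact Sum.inl.inj this
  have hαβ : ∀ (j : Fin d) (m : Fin ℓ), α j - β m ≠ 0 := fun j m' => by
    intro hzero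
    have : v (Sum.inr j) = v (Sum.inl m') := by
      simpa [hvdef] using sub_eq_zero.mp hzero
    exact absurd (hinj this) (by simp)
  -- the polynomials
  set π : F[X] := ∏ m' : Fin ℓ, (X - C (β m')) with hπdef
  have hπmonic : π.Monic := monic_prod_of_monic _ _ fun m' _ => monic_X_sub_C (β m')
  have hπnd : π.natDegree = ℓ := by
    rw [hπdef, natDegree_prod_of_monic _ _ fun m' _ => monic_X_sub_C (β m')]
    simp
  have hπeval : ∀ x : F, π.eval x = ∏ m', (x - β m') := fun x => by
    simp [hπdef, eval_prod]
  set gp : F[X] := ∑ j : Fin ℓ,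
      C (κ j / lamPt β α (Sum.inl j) / ∏ m' ∈ Finset.univ.erase j, (β j - β m')) *
        ∏ m' ∈ Finset.univ.erase j, (X - C (β m')) with hgpdef
  have hgpeval : ∀ x : F, gp.eval x = gFun β α κ x := by
    intro x
    rw [hgpdef, gFun]
    simp only [eval_finset_sum, eval_mul, eval_C, eval_prod, eval_sub, eval_X]
    exact Finset.sum_congr rfl fun j _ => by rw [div_mul_eq_mul_div]
  set h : F[X] := (∑ i ∈ Finset.range t, C (u ^ q ^ i) * π ^ (q ^ i - 1)) * gp * f
    with hhdef
  -- degree bound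
  have hdegh : h.degree < (((ℓ + d) - 1 : ℕ) : WithBot ℕ) := by
    have hfdeg : f.degree ≤ ((k - 1 : ℕ) : WithBot ℕ) := by
      rcases eq_or_ne f 0 with rfl | h0
      · simp
      · rw [degree_eq_natDegree h0] at hf ⊢
        have : f.natDegree < k := by exact_mod_cast hf
        exact_mod_cast Nat.le_sub_one_of_lt this
    have hgpd : gp.degree ≤ ((ℓ - 1 : ℕ) : WithBot ℕ) := by
      rw [hgpdef]
      refine le_trans (degree_sum_le _ _) (Finset.sup_le fun j _ => ?_)
      refine le_trans (degree_mul_le _ _) ?_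
      have h2 : (∏ m' ∈ Finset.univ.erase j, (X - C (β m'))).degree
          = ((ℓ - 1 : ℕ) : WithBot ℕ) := by
        rw [← Lagrange.nodal_eq, Lagrange.degree_nodal,
          Finset.card_erase_of_mem (Finset.mem_univ j)]
        simp
      calc (C (κ j / lamPt β α (Sum.inl j) / ∏ m' ∈ Finset.univ.erase j, (β j - β m'))).degree
            + (∏ m' ∈ Finset.univ.erase j, (X - C (β m'))).degree
          ≤ 0 + ((ℓ - 1 : ℕ) : WithBot ℕ) := add_le_add degree_C_le h2.le
        _ = ((ℓ - 1 : ℕ) : WithBot ℕ) := zero_add _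
    have hTd : (∑ i ∈ Finset.range t, C (u ^ q ^ i) * π ^ (q ^ i - 1)).degree
        ≤ (((q ^ (t - 1) - 1) * ℓ : ℕ) : WithBot ℕ) := by
      refine le_trans (degree_sum_le _ _) (Finset.sup_le fun i hi => ?_)
      refine le_trans (degree_mul_le _ _) ?_
      have hmon : (π ^ (q ^ i - 1)).Monic := hπmonic.pow _
      have h2 : (π ^ (q ^ i - 1)).degree = (((q ^ i - 1) * ℓ : ℕ) : WithBot ℕ) := by
        rw [degree_eq_natDegree hmon.ne_zero, natDegree_pow, hπnd]
      have hle : (q ^ i - 1) * ℓ ≤ (q ^ (t - 1) - 1) * ℓ := by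
        refine Nat.mul_le_mul_right ℓ (Nat.sub_le_sub_right ?_ 1)
        exact Nat.pow_le_pow_right (by omega) (by have := Finset.mem_range.mp hi; omega)
      calc (C (u ^ q ^ i)).degree + (π ^ (q ^ i - 1)).degree
          ≤ 0 + (((q ^ (t - 1) - 1) * ℓ : ℕ) : WithBot ℕ) := by
            refine add_le_add degree_C_le ?_
            rw [h2]
            exact_mod_cast hle
        _ = (((q ^ (t - 1) - 1) * ℓ : ℕ) : WithBot ℕ) := zero_add _
    have hcomb : h.degree ≤ (((q ^ (t - 1) - 1) * ℓ + (ℓ - 1) + (k - 1) : ℕ) : WithBot ℕ) := by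
      rw [hhdef]
      refine le_trans (degree_mul_le _ _) ?_
      refine le_trans (add_le_add (le_trans (degree_mul_le _ _) (add_le_add hTd hgpd)) hfdeg) ?_
      rw [← Nat.cast_add, ← Nat.cast_add]
    refine lt_of_le_of_lt hcomb ?_
    have hX1 : 1 ≤ q ^ (t - 1) := Nat.one_le_pow _ _ (by omega)
    have hYle : ℓ ≤ ℓ * q ^ (t - 1) := Nat.le_mul_of_pos_right ℓ (by omega)
    have hsub : (q ^ (t - 1) - 1) * ℓ = ℓ * q ^ (t - 1) - ℓ := by
      rw [tsub_mul, one_mul, mul_comm]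
    rw [Nat.cast_lt, hsub]
    generalize hYdef : ℓ * q ^ (t - 1) = Y at hdbig hYle ⊢
    omega
  -- evaluations at the β nodes
  have hD : ∀ j : Fin ℓ, ∏ m' ∈ Finset.univ.erase j, (β j - β m') ≠ 0 := by
    intro j
    rw [Finset.prod_ne_zero_iff]
    intro m' hm'
    exact sub_ne_zero.mpr fun he => (Finset.mem_erase.mp hm').1 (hβinj he.symm)
  have hgβ : ∀ j : Fin ℓ, gFun β α κ (β j) = κ j / lamPt β α (Sum.inl j) := by
    intro j
    rw [gFun, Finset.sum_eq_single j]
    · rw [mul_div_assoc, div_self (hD j), mul_one]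
    · intro j' _ hj'
      have hzero : ∏ m' ∈ Finset.univ.erase j', (β j - β m') = 0 :=
        Finset.prod_eq_zero (Finset.mem_erase.mpr ⟨Ne.symm hj', Finset.mem_univ j⟩) (sub_self (β j))
      rw [hzero, mul_zero, zero_div]
    · intro hj; exact absurd (Finset.mem_univ j) hj
  have hπβ : ∀ j : Fin ℓ, π.eval (β j) = 0 := by
    intro j
    rw [hπeval]
    exact Finset.prod_eq_zero (Finset.mem_univ j) (sub_self (β j))
  have hβeval : ∀ j : Fin ℓ, h.eval (β j) = u * (κ j / lamPt β α (Sum.inl j)) * f.eval (β j) := by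
    intro j
    rw [hhdef, eval_mul, eval_mul, hgpeval, hgβ]
    congr 1
    congr 1
    rw [eval_finset_sum]
    simp only [eval_mul, eval_pow, eval_C, hπβ]
    rw [Finset.sum_eq_single 0]
    · simp
    · intro i _ hi
      have : q ^ i - 1 ≠ 0 := by
        have : q ≤ q ^ i := Nat.le_self_pow hi q
        omega
      rw [zero_pow this, mul_zero]
    · intro h0; exact absurd (Finset.mem_range.mpr htpos) h0
  -- evaluations at the α nodes
  have hπα : ∀ j : Fin d, (∏ m' : Fin ℓ, (α j - β m')) ≠ 0 := by
    intro j
    rw [Finset.prod_ne_zero_iff]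
    exact fun m' _ => hαβ j m'
  have hαeval : ∀ j : Fin d, h.eval (α j) =
      (traceFun q t (u * ∏ m', (α j - β m')) / ∏ m', (α j - β m')) *
        gFun β α κ (α j) * f.eval (α j) := by
    intro j
    rw [hhdef, eval_mul, eval_mul, hgpeval]
    congr 2
    rw [eval_finset_sum]
    simp only [eval_mul, eval_pow, eval_C, hπeval]
    rw [eq_div_iff (hπα j), Finset.sum_mul, traceFun]
    refine Finset.sum_congr rfl fun i _ => ?_
    rw [mul_assoc, ← pow_succ, Nat.sub_add_cancel (Nat.one_le_pow _ _ (by omega)), mul_pow]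
  -- lamPt nonvanishing
  have hlam : ∀ i, lamPt β α i ≠ 0 := by
    intro i
    rw [lamPt]
    apply inv_ne_zero
    rw [Finset.prod_ne_zero_iff]
    intro j hj
    exact sub_ne_zero.mpr fun hvij => (Finset.mem_erase.mp hj).1.symm (hinj hvij)
  -- the key numeric identity from the dual code
  have hkey : u * ∑ j, κ j * f.eval (β j)
      = - ∑ j : Fin d, lamPt β α (Sum.inr j) *
          ((traceFun q t (u * ∏ m', (α j - β m')) / ∏ m', (α j - β m')) *
            gFun β α κ (α j) * f.eval (α j)) := by
    have hcardsum : Fintype.card (Fin ℓ ⊕ Fin d) = ℓ + d := by simp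
    have hdeg' : h.degree < ((Fintype.card (Fin ℓ ⊕ Fin d) - 1 : ℕ) : WithBot ℕ) := by
      rw [hcardsum]; exact hdegh
    have hsum0 := dualRS v hinj h hdeg'
    rw [Fintype.sum_sum_type] at hsum0
    have hlamPt : ∀ i, (∏ j' ∈ Finset.univ.erase i, (v i - v j'))⁻¹ = lamPt β α i :=
      fun i => rfl
    simp only [hlamPt] at hsum0
    have hv1 : ∀ j : Fin ℓ, v (Sum.inl j) = β j := fun j => rfl
    have hv2 : ∀ j : Fin d, v (Sum.inr j) = α j := fun j => rfl
    simp only [hv1, hv2] at hsum0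
    simp only [hβeval, hαeval] at hsum0
    have hfirst : (∑ j : Fin ℓ,
        lamPt β α (Sum.inl j) * (u * (κ j / lamPt β α (Sum.inl j)) * f.eval (β j)))
          = u * ∑ j, κ j * f.eval (β j) := by
      rw [Finset.mul_sum]
      refine Finset.sum_congr rfl fun j _ => ?_
      have hne : lamPt β α (Sum.inl j) ≠ 0 := hlam _
      field_simp
    rw [hfirst] at hsum0
    exact eq_neg_of_add_eq_zero_left hsum0
  -- apply the trace
  rw [hkey, hqpm]
  rw [traceFun_neg, traceFun_sum]
  rw [neg_inj]
  refine Finset.sum_congr rfl fun j _ => ?_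
  have hfix : ∀ y : F, y ^ (p ^ M) ^ t = y := by
    intro y
    have he : (p ^ M) ^ t = Fintype.card F := by rw [← hqpm, hcardF]
    rw [he]
    exact FiniteField.pow_card y
  have hs : (traceFun (p ^ M) t (u * ∏ m', (α j - β m'))) ^ (p ^ M)
      = traceFun (p ^ M) t (u * ∏ m', (α j - β m')) :=
    traceFun_fixed hfix _
  have harg : lamPt β α (Sum.inr j) *
      ((traceFun (p ^ M) t (u * ∏ m', (α j - β m')) / ∏ m', (α j - β m')) *
        gFun β α κ (α j) * f.eval (α j))
      = traceFun (p ^ M) t (u * ∏ m', (α j - β m')) *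
        (gFun β α κ (α j) * lamPt β α (Sum.inr j) * f.eval (α j) /
          ∏ m', (α j - β m')) := by
    ring
  rw [harg, traceFun_smul t hs]
end

section
/- Let B be a finite field with q = |B| elements and let F be a field extension of B of degree t. Let W ⊆ F be a B-linear subspace of dimension s with 0 < s < t, let L_W(x) = ∏_{w ∈ W}(x − w), and let c_0 ∈ F be the coefficient of x in L_W (which is nonzero). Let ℓ, d, k be positive integers with ℓ ≤ k ≤ ℓ + d and d ≥ ℓ·q^{s} − ℓ + k. Let β_1, …, β_ℓ, α_1, …, α_d be ℓ + d pairwise distinct elements of F and let κ_1, …, κ_ℓ ∈ F be nonzero. For each point ω among these n = ℓ + d points let λ(ω) = (∏_{ω' ≠ ω}(ω − ω'))^{-1}, the product over the other n − 1 points. Define g(x) = ∑_{j=1}^ℓ (κ_j / (c_0 λ(β_j))) · ∏_{m≠j}(x − β_m) / ∏_{m≠j}(β_j − β_m). Then for every polynomial f ∈ F[x] with deg f ≤ k − 1 and every u ∈ F: u · ∑_{j=1}^ℓ κ_j f(β_j) = − ∑_{j=1}^d g(α_j) · L_W( u · ∏_{m=1}^ℓ (α_j − β_m) ) · λ(α_j)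 · f(α_j) / ∏_{m=1}^ℓ (α_j − β_m). -/
open Finset Polynomial

/-- The subspace polynomial `L_W(x) = ∏_{w ∈ W} (x - w)`. -/
noncomputable def subspacePoly {B F : Type*} [Field B] [Field F] [Finite F] [Algebra B F]
    (W : Submodule B F) : Polynomial F :=
  ∏ w ∈ (Set.toFinite (W : Set F)).toFinset, (Polynomial.X - Polynomial.C w)

/-- `g(x) = ∑_j (κ_j / (c₀ λ(β_j))) ∏_{m ≠ j}(x - β_m) / ∏_{m ≠ j}(β_j - β_m)`, where
`c₀` is the coefficient of `x` in the subspace polynomial `L_W`. -/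
noncomputable def gFunW {B F : Type*} [Field B] [Field F] [Finite F] [Algebra B F]
    (W : Submodule B F) {ℓ d : ℕ}
    (β : Fin ℓ → F) (α : Fin d → F) (κ : Fin ℓ → F) (x : F) : F :=
  ∑ j : Fin ℓ, (κ j / ((subspacePoly (B := B) W).coeff 1 * lamPt β α (Sum.inl j))) *
    (∏ m ∈ Finset.univ.erase j, (x - β m)) / (∏ m ∈ Finset.univ.erase j, (β j - β m))


section Scheme2Helpers

set_option linter.unusedSectionVars false

lemma lam_sum_zero {F ι : Type*} [Field F] [DecidableEq ι] [Fintype ι]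
    {v : ι → F} (hv : Function.Injective v) {P : F[X]}
    (hP : P.degree < ((Fintype.card ι - 1 : ℕ) : WithBot ℕ)) :
    ∑ i : ι, (∏ j ∈ Finset.univ.erase i, (v i - v j))⁻¹ * P.eval (v i) = 0 := by
  have hinj : Set.InjOn v (Finset.univ : Finset ι) := fun a _ b _ h => hv h
  have hPP : P = Lagrange.interpolate Finset.univ v (fun i => P.eval (v i)) := by
    apply Lagrange.eq_interpolate hinj
    refine lt_of_lt_of_le hP ?_
    rw [Finset.card_univ]
    exact_mod_cast Nat.sub_le _ _
  have h0 : P.coeff (Fintype.card ι - 1) = 0 := coeff_eq_zero_of_degree_lt hP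
  rw [hPP, Lagrange.interpolate_apply, finset_sum_coeff] at h0
  rw [← h0]
  apply Finset.sum_congr rfl
  intro i _
  have hmem : i ∈ (Finset.univ : Finset ι) := mem_univ i
  have hnd : (Lagrange.basis Finset.univ v i).natDegree = Fintype.card ι - 1 := by
    rw [Lagrange.natDegree_basis hinj hmem, Finset.card_univ]
  have hlc : (Lagrange.basis Finset.univ v i).coeff (Fintype.card ι - 1)
      = ∏ j ∈ Finset.univ.erase i, (v i - v j)⁻¹ := by
    rw [← hnd, coeff_natDegree]
    unfold Lagrange.basis
    rw [leadingCoeff_prod]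
    apply Finset.prod_congr rfl
    intro j hj
    have hne : v i ≠ v j := fun h => (Finset.mem_erase.mp hj).1 (hv h).symm
    rw [Lagrange.basisDivisor, leadingCoeff_mul, leadingCoeff_C,
      (monic_X_sub_C _).leadingCoeff, mul_one]
  rw [coeff_C_mul, hlc, ← Finset.prod_inv_distrib]
  ring

variable {B F : Type*} [Field B] [Fintype B] [Field F] [Fintype F] [DecidableEq F] [Algebra B F]
    (W : Submodule B F)

lemma sp_natDegree : (subspacePoly (B := B) W).natDegree
    = (Set.toFinite (W : Set F)).toFinset.card := by
  unfold subspacePoly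
  rw [natDegree_prod _ _ (fun w _ => X_sub_C_ne_zero w)]
  simp [natDegree_X_sub_C]

lemma sp_card {s : ℕ} (hWs : Module.finrank B W = s) :
    (Set.toFinite (W : Set F)).toFinset.card = Fintype.card B ^ s := by
  haveI : Fintype ↥W := Fintype.ofFinite _
  rw [← Set.ncard_eq_toFinset_card (W : Set F) (Set.toFinite _), ← Nat.card_coe_set_eq]
  have : Nat.card ↥(W : Set F) = Nat.card ↥W := rfl
  rw [this, Nat.card_eq_fintype_card, Module.card_eq_pow_finrank (K := B), hWs]

lemma sp_eval_zero : (subspacePoly (B := B) W).eval 0 = 0 := by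
  unfold subspacePoly
  rw [eval_prod]
  apply Finset.prod_eq_zero (i := (0 : F))
  · simp [W.zero_mem]
  · simp

lemma coeff_one_eq_deriv_eval (p : F[X]) : p.coeff 1 = p.derivative.eval 0 := by
  rw [← coeff_zero_eq_eval_zero, coeff_derivative]
  push_cast; ring

lemma sp_coeff_one_ne_zero : (subspacePoly (B := B) W).coeff 1 ≠ 0 := by
  rw [coeff_one_eq_deriv_eval]
  unfold subspacePoly
  set T := (Set.toFinite (W : Set F)).toFinset with hT
  have h0 : (0 : F) ∈ T := by simp [hT, W.zero_mem]
  have h0' : (0 : F) ∈ T.val := h0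
  have key := eval_multiset_prod_X_sub_C_derivative (S := T.val) (r := (0:F)) h0'
  rw [show (∏ w ∈ T, (X - C w)) = (Multiset.map (fun a => X - C a) T.val).prod from rfl, key]
  apply Multiset.prod_ne_zero
  rw [Multiset.mem_map]
  rintro ⟨a, ha, ha0⟩
  have hane : a ≠ 0 := ((T.nodup.mem_erase_iff).mp ha).1
  apply hane
  have : (0:F) - a = 0 := ha0
  linear_combination -this

end Scheme2Helpers

/-- The key parity-check identity underlying Scheme 2 (subspace-polynomial based
evaluation): for all `f` with `deg f ≤ k - 1` and all `u ∈ F`,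
`u ∑_j κ_j f(β_j) = - ∑_j g(α_j) L_W(u ∏_m (α_j - β_m)) λ(α_j) f(α_j) / ∏_m (α_j - β_m)`. -/
theorem scheme2_parity_check_identity {B F : Type*} [Field B] [Fintype B]
    [Field F] [Fintype F] [DecidableEq F] [Algebra B F]
    (t s : ℕ) (ht : Module.finrank B F = t)
    (W : Submodule B F) (hWs : Module.finrank B W = s) (hs0 : 0 < s) (hst : s < t)
    (ℓ d k : ℕ) (hℓ : 0 < ℓ) (hd : 0 < d) (hk : 0 < k)
    (hℓk : ℓ ≤ k) (hkℓd : k ≤ ℓ + d)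
    (hdbig : ℓ * Fintype.card B ^ s - ℓ + k ≤ d)
    (β : Fin ℓ → F) (α : Fin d → F)
    (hinj : Function.Injective (Sum.elim β α))
    (κ : Fin ℓ → F) (hκ : ∀ i, κ i ≠ 0)
    (f : Polynomial F) (hf : f.degree < (k : WithBot ℕ)) (u : F) :
    u * ∑ j, κ j * f.eval (β j) =
      - ∑ j : Fin d,
          gFunW (B := B) W β α κ (α j) *
          (subspacePoly (B := B) W).eval (u * ∏ m, (α j - β m)) *
          lamPt β α (Sum.inr j) * f.eval (α j) / ∏ m, (α j - β m) := by
  classical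
  set L := subspacePoly (B := B) W with hL
  set c₁ := L.coeff 1 with hc₁def
  have hc₁ : c₁ ≠ 0 := sp_coeff_one_ne_zero W
  set q := Fintype.card B ^ s with hq
  have hq2 : 2 ≤ q := Nat.one_lt_pow hs0.ne' Fintype.one_lt_card
  have hLdeg : L.natDegree = q := by rw [hL, sp_natDegree, sp_card W hWs]
  -- distinctness facts
  have hβinj : Function.Injective β := fun a b h => by
    have := hinj (show Sum.elim β α (Sum.inl a) = Sum.elim β α (Sum.inl b) from h)
    simpa using this
  have hαβ : ∀ (j : Fin d) (m : Fin ℓ), α j - β m ≠ 0 := by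
    intro j m
    refine sub_ne_zero.mpr fun h => ?_
    have := hinj (show Sum.elim β α (Sum.inr j) = Sum.elim β α (Sum.inl m) from h)
    exact Sum.inr_ne_inl this
  have hzne : ∀ j : Fin d, (∏ m, (α j - β m)) ≠ 0 := fun j =>
    Finset.prod_ne_zero_iff.mpr fun m _ => hαβ j m
  have hDne : ∀ j : Fin ℓ, (∏ m ∈ Finset.univ.erase j, (β j - β m)) ≠ 0 := fun j =>
    Finset.prod_ne_zero_iff.mpr fun m hm =>
      sub_ne_zero.mpr fun h => (Finset.mem_erase.mp hm).1 (hβinj h).symm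
  have hlamne : ∀ i, lamPt β α i ≠ 0 := by
    intro i
    unfold lamPt
    apply inv_ne_zero
    apply Finset.prod_ne_zero_iff.mpr
    intro i' hi'
    exact sub_ne_zero.mpr fun h => (Finset.mem_erase.mp hi').1 (hinj h).symm
  -- the quotient polynomial R with L(u*z) = z * R(z)
  set Qp := L.comp (C u * X) with hQp
  have hQ0 : Qp.coeff 0 = 0 := by
    rw [coeff_zero_eq_eval_zero, hQp, eval_comp]
    simpa using sp_eval_zero W
  obtain ⟨R, hR⟩ := X_dvd_iff.mpr hQ0
  have hReval0 : R.eval 0 = u * c₁ := by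
    have h1 : Qp.coeff 1 = R.coeff 0 := by rw [hR, coeff_X_mul]
    have h2 : Qp.coeff 1 = u * c₁ := by
      rw [coeff_one_eq_deriv_eval, hQp, derivative_comp]
      simp [coeff_one_eq_deriv_eval, hc₁def]
    rw [← coeff_zero_eq_eval_zero, ← h1, h2]
  have hRdeg : R.natDegree ≤ q - 1 := by
    rcases eq_or_ne R 0 with h | h
    · simp [h]
    · have h1 : Qp.natDegree = 1 + R.natDegree := by
        rw [hR, natDegree_mul X_ne_zero h, natDegree_X]
      have h2 : Qp.natDegree ≤ q := by
        rw [hQp, natDegree_comp, hLdeg]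
        have : (C u * X : F[X]).natDegree ≤ 1 :=
          le_trans (natDegree_mul_le) (by simp)
        calc q * (C u * X : F[X]).natDegree ≤ q * 1 := Nat.mul_le_mul_left _ this
        _ = q := Nat.mul_one q
      omega
  have hReval : ∀ z : F, z ≠ 0 → R.eval z = L.eval (u * z) / z := by
    intro z hz
    have h1 : Qp.eval z = z * R.eval z := by rw [hR]; simp
    have h2 : Qp.eval z = L.eval (u * z) := by rw [hQp, eval_comp]; simp
    rw [← h2, h1, mul_div_cancel_left₀ _ hz]
  -- the interpolation-style polynomial G with G.eval = gFunW
  set G : F[X] := ∑ j : Fin ℓ, C (κ j / (c₁ * lamPt β α (Sum.inl j)) /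
      (∏ m ∈ Finset.univ.erase j, (β j - β m))) * ∏ m ∈ Finset.univ.erase j, (X - C (β m))
    with hG
  have hGeval : ∀ x : F, G.eval x = gFunW (B := B) W β α κ x := by
    intro x
    rw [hG, eval_finset_sum]
    unfold gFunW
    refine Finset.sum_congr rfl fun j _ => ?_
    rw [eval_mul, eval_C, eval_prod]
    simp only [eval_sub, eval_X, eval_C]
    rw [div_mul_eq_mul_div, ← hL, ← hc₁def]
  have hGdeg : G.natDegree ≤ ℓ - 1 := by
    apply natDegree_sum_le_of_forall_le
    intro j _
    refine le_trans natDegree_mul_le ?_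
    rw [natDegree_C, zero_add]
    refine le_trans (natDegree_prod_le _ _) ?_
    simp only [natDegree_X_sub_C, Finset.sum_const, smul_eq_mul, mul_one]
    rw [Finset.card_erase_of_mem (Finset.mem_univ j), Finset.card_univ, Fintype.card_fin]
  -- Z and the big polynomial P
  set Z : F[X] := ∏ m : Fin ℓ, (X - C (β m)) with hZ
  have hZdeg : Z.natDegree = ℓ := by
    rw [hZ, natDegree_prod _ _ (fun m _ => X_sub_C_ne_zero (β m))]
    simp [natDegree_X_sub_C]
  have hZeval : ∀ x : F, Z.eval x = ∏ m, (x - β m) := by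
    intro x; rw [hZ, eval_prod]; simp
  set P := G * (f * R.comp Z) with hP
  have hfnd : f.natDegree ≤ k - 1 := by
    rcases eq_or_ne f 0 with h | h
    · simp [h]
    · have := (natDegree_lt_iff_degree_lt h).mpr hf
      omega
  have hPdeg : P.degree < ((ℓ + d - 1 : ℕ) : WithBot ℕ) := by
    refine lt_of_le_of_lt degree_le_natDegree ?_
    have hnd : P.natDegree ≤ (ℓ - 1) + ((k - 1) + (q - 1) * ℓ) := by
      refine le_trans natDegree_mul_le ?_
      refine add_le_add hGdeg (le_trans natDegree_mul_le (add_le_add hfnd ?_))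
      rw [natDegree_comp, hZdeg]
      exact Nat.mul_le_mul_right _ hRdeg
    have : P.natDegree < ℓ + d - 1 := by
      have hdb : ℓ * q - ℓ + k ≤ d := hdbig
      have hlq : ℓ ≤ ℓ * q := Nat.le_mul_of_pos_right _ (by omega)
      have hmm : (q - 1) * ℓ = ℓ * q - ℓ := by
        rw [Nat.sub_mul, one_mul, Nat.mul_comm]
      omega
    exact_mod_cast this
  -- apply the key vanishing identity
  have key := lam_sum_zero hinj (P := P)
    (by rwa [Fintype.card_sum, Fintype.card_fin, Fintype.card_fin])
  rw [Fintype.sum_sum_type] at key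
  have hβterm : ∀ j : Fin ℓ,
      (∏ i' ∈ Finset.univ.erase (Sum.inl j),
        (Sum.elim β α (Sum.inl j) - Sum.elim β α i'))⁻¹ * P.eval (Sum.elim β α (Sum.inl j))
      = u * (κ j * f.eval (β j)) := by
    intro j
    have hlam : (∏ i' ∈ Finset.univ.erase (Sum.inl j),
        (Sum.elim β α (Sum.inl j) - Sum.elim β α i'))⁻¹ = lamPt β α (Sum.inl j) := rfl
    have hZ0 : Z.eval (β j) = 0 := by
      rw [hZeval]
      exact Finset.prod_eq_zero (Finset.mem_univ j) (sub_self _)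
    have hGβ : G.eval (β j) = κ j / (c₁ * lamPt β α (Sum.inl j)) := by
      rw [hG, eval_finset_sum]
      rw [Finset.sum_eq_single j]
      · rw [eval_mul, eval_C, eval_prod]
        simp only [eval_sub, eval_X, eval_C]
        rw [div_mul_cancel₀ _ (hDne j)]
      · intro j' _ hj'
        rw [eval_mul, eval_prod]
        apply mul_eq_zero_of_right
        refine Finset.prod_eq_zero (Finset.mem_erase.mpr ⟨Ne.symm hj', Finset.mem_univ j⟩) ?_
        simp
      · intro h; exact absurd (Finset.mem_univ j) h
    rw [hlam, hP]
    simp only [Sum.elim_inl, eval_mul, eval_comp]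
    rw [hZ0, hReval0, hGβ]
    field_simp [hlamne (Sum.inl j), hc₁]
  have hαterm : ∀ j : Fin d,
      (∏ i' ∈ Finset.univ.erase (Sum.inr j),
        (Sum.elim β α (Sum.inr j) - Sum.elim β α i'))⁻¹ * P.eval (Sum.elim β α (Sum.inr j))
      = gFunW (B := B) W β α κ (α j) * L.eval (u * ∏ m, (α j - β m)) *
          lamPt β α (Sum.inr j) * f.eval (α j) / ∏ m, (α j - β m) := by
    intro j
    have hlam : (∏ i' ∈ Finset.univ.erase (Sum.inr j),
        (Sum.elim β α (Sum.inr j) - Sum.elim β α i'))⁻¹ = lamPt β α (Sum.inr j) := rfl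
    rw [hlam, hP]
    simp only [Sum.elim_inr, eval_mul, eval_comp]
    rw [hZeval, hReval _ (hzne j), hGeval]
    field_simp
  rw [Finset.sum_congr rfl (fun j _ => hβterm j), Finset.sum_congr rfl (fun j _ => hαterm j)] at key
  rw [← Finset.mul_sum] at key
  exact eq_neg_of_add_eq_zero_left key
end

section
/- Let B be a finite field with q = |B| elements, let F be a field extension of B of degree t, and let W ⊆ F be a B-linear subspace of dimension s with 0 < s < t. Let ℓ, d, k be positive integers with ℓ ≤ k ≤ ℓ + d and d ≥ ℓ·q^{s} − ℓ + k. Let β_1, …, β_ℓ, α_1, …, α_d be ℓ + d pairwise distinct elements of F and let κ_1, …, κ_ℓ ∈ F be nonzero. Then there exist B-linear maps g_1, …, g_d : F → B^{t−s} and a B-linear map h : (B^{t−s})^d → F such that for every polynomial f ∈ F[x] with deg f ≤ k − 1, h(g_1(f(α_1)), …, g_d(f(α_d))) = ∑_{i=1}^ℓ κ_i f(β_i). That is, the Reed–Solomon code RS({β_1,…,β_ℓ,α_1,…,α_d}, k) admits a B-linear weighted-sum evaluation scheme with bandwidth d(t − s) sub-symbols of B. -/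
open Finset Polynomial


lemma lagrangeA {F : Type*} [Field F] {ι : Type*} [Fintype ι] [DecidableEq ι] [Nonempty ι]
    (v : ι → F) (hv : Function.Injective v) (P : Polynomial F)
    (hP : P.degree < ((Fintype.card ι - 1 : ℕ) : WithBot ℕ)) :
    ∑ m, P.eval (v m) * ∏ m' ∈ Finset.univ.erase m, (v m - v m')⁻¹ = 0 := by
  have hcard : 0 < Fintype.card ι := Fintype.card_pos
  have hPn : P.degree < (#(Finset.univ : Finset ι) : ℕ) := by
    refine lt_of_lt_of_le hP ?_
    rw [card_univ]
    exact Nat.cast_le.mpr (Nat.sub_le _ _)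
  have hint := Lagrange.eq_interpolate (s := Finset.univ) (v := v)
    (hv.injOn) hPn
  have hco : P.coeff (Fintype.card ι - 1) = 0 := coeff_eq_zero_of_degree_lt hP
  have hbasis : ∀ m : ι, (Lagrange.basis Finset.univ v m).coeff (Fintype.card ι - 1)
      = ∏ m' ∈ Finset.univ.erase m, (v m - v m')⁻¹ := by
    intro m
    rw [Lagrange.basis]
    have : ∀ j ∈ Finset.univ.erase m, Lagrange.basisDivisor (v m) (v j)
        = C (v m - v j)⁻¹ * (X - C (v j)) := fun j _ => rfl
    rw [Finset.prod_congr rfl this, Finset.prod_mul_distrib, ← map_prod]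
    have hmonic : ((Finset.univ.erase m).prod fun j => (X - C (v j))).Monic :=
      monic_prod_of_monic _ _ (fun j _ => monic_X_sub_C _)
    have hdeg : ((Finset.univ.erase m).prod fun j => (X - C (v j))).natDegree
        = Fintype.card ι - 1 := by
      rw [natDegree_prod _ _ (fun j _ => X_sub_C_ne_zero (v j))]
      simp [card_erase_of_mem, card_univ]
    rw [coeff_C_mul, ← hdeg, hmonic.coeff_natDegree, mul_one]
  have := congrArg (fun Q => Q.coeff (Fintype.card ι - 1)) hint
  simp only [Lagrange.interpolate_apply, finset_sum_coeff, coeff_C_mul, hbasis, hco] at this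
  exact this.symm

section Subspace
attribute [local instance] Classical.propDecidable
variable {B F : Type*} [Field B] [Fintype B] [Field F] [Algebra B F] [Fintype F]
  (W : Submodule B F)

noncomputable def LW : F[X] := ∏ w ∈ Set.toFinset (W : Set F), (X - C w)

lemma LW_monic : (LW W).Monic := monic_prod_of_monic _ _ (fun w _ => monic_X_sub_C _)

lemma LW_natDegree : (LW W).natDegree = (Set.toFinset (W : Set F)).card := by
  rw [LW, natDegree_prod _ _ (fun w _ => X_sub_C_ne_zero w)]
  simp

lemma LW_card_pos : 0 < (Set.toFinset (W : Set F)).card := by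
  refine Finset.card_pos.mpr ⟨0, ?_⟩
  rw [Set.mem_toFinset]
  exact W.zero_mem

lemma LW_eval_mem {w : F} (hw : w ∈ W) : (LW W).eval w = 0 := by
  rw [LW, eval_prod]
  exact Finset.prod_eq_zero (Set.mem_toFinset.mpr hw) (by simp)

lemma LW_eval_add_mem (y : F) {w : F} (hw : w ∈ W) :
    (LW W).eval (y + w) = (LW W).eval y := by
  rw [LW, eval_prod, eval_prod]
  apply Finset.prod_nbij' (fun w' => w' - w) (fun w' => w' + w)
  · intro a ha; rw [Set.mem_toFinset] at ha ⊢; exact W.sub_mem ha hw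
  · intro a ha; rw [Set.mem_toFinset] at ha ⊢; exact W.add_mem ha hw
  · intro a _; ring
  · intro a _; ring
  · intro a _; simp only [eval_sub, eval_X, eval_C]; ring

lemma LW_degree_eq : (LW W).degree = ((Set.toFinset (W : Set F)).card : WithBot ℕ) := by
  rw [degree_eq_natDegree (LW_monic W).ne_zero, LW_natDegree]

lemma LW_eval_add (x y : F) : (LW W).eval (x + y) = (LW W).eval x + (LW W).eval y := by
  set L := LW W with hLd
  set Wt := Set.toFinset (W : Set F) with hWt
  set g : F[X] := L.comp (X + C y) - L - C (L.eval y) with hg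
  have hroots : ∀ w ∈ Wt, g.eval w = 0 := by
    intro w hw
    rw [Set.mem_toFinset] at hw
    simp only [hg, eval_sub, eval_comp, eval_add, eval_X, eval_C]
    rw [add_comm w y, LW_eval_add_mem W y hw, LW_eval_mem W hw]
    ring
  have hgdeg : g.degree < (Wt.card : WithBot ℕ) := by
    have hdc : (L.comp (X + C y)).degree = L.degree := by
      rw [degree_eq_natDegree (comp_X_add_C_ne_zero_iff.mpr (LW_monic W).ne_zero),
        degree_eq_natDegree (LW_monic W).ne_zero, natDegree_comp]
      simp
    have h2 : (L.comp (X + C y) - L).degree < L.degree := by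
      have := degree_sub_lt hdc (comp_X_add_C_ne_zero_iff.mpr (LW_monic W).ne_zero)
        (by rw [((LW_monic W).comp_X_add_C y).leadingCoeff, (LW_monic W).leadingCoeff])
      rwa [hdc] at this
    have h3 : (C (L.eval y)).degree < L.degree := by
      refine lt_of_le_of_lt degree_C_le ?_
      rw [LW_degree_eq]
      exact_mod_cast LW_card_pos W
    calc g.degree ≤ max (L.comp (X + C y) - L).degree (C (L.eval y)).degree :=
            degree_sub_le _ _
      _ < L.degree := max_lt h2 h3
      _ = (Wt.card : WithBot ℕ) := LW_degree_eq W
  have hg0 : g = 0 := by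
    rcases eq_or_ne g 0 with h | h
    · exact h
    · exact eq_zero_of_natDegree_lt_card_of_eval_eq_zero' g Wt hroots
        ((natDegree_lt_iff_degree_lt h).mpr hgdeg)
  have := congrArg (eval x) hg0
  simp only [hg, eval_sub, eval_comp, eval_add, eval_X, eval_C, eval_zero] at this
  linear_combination this

lemma LW_eval_smul (m : ℕ) (hcard : (Set.toFinset (W : Set F)).card = Fintype.card B ^ m)
    (c : B) (x : F) : (LW W).eval (algebraMap B F c * x) = algebraMap B F c * (LW W).eval x := by
  set L := LW W with hLd
  set Wt := Set.toFinset (W : Set F) with hWt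
  set c' := algebraMap B F c with hc'
  rcases eq_or_ne c' 0 with hc0 | hc0
  · rw [hc0, zero_mul, zero_mul, LW_eval_mem W W.zero_mem]
  have hcpow : c' ^ Wt.card = c' := by
    rw [hcard, hc', ← map_pow, FiniteField.pow_card_pow]
  set g : F[X] := L.comp (C c' * X) - C c' * L with hg
  have hroots : ∀ w ∈ Wt, g.eval w = 0 := by
    intro w hw
    rw [Set.mem_toFinset] at hw
    simp only [hg, eval_sub, eval_comp, eval_mul, eval_C, eval_X]
    have hcw : c' * w ∈ W := by
      rw [hc', ← Algebra.smul_def]; exact W.smul_mem c hw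
    rw [LW_eval_mem W hw, LW_eval_mem W hcw]
    ring
  have hCcX : (C c' * X : F[X]).natDegree = 1 := by
    rw [natDegree_mul (fun h => hc0 (C_eq_zero.mp h)) X_ne_zero]; simp
  have hcompne : L.comp (C c' * X) ≠ 0 := fun hcontr => by
    have := natDegree_comp (p := L) (q := (C c' * X))
    rw [hcontr, natDegree_zero, hCcX, mul_one, LW_natDegree] at this
    have := LW_card_pos (B := B) W
    omega
  have hgdeg : g.degree < (Wt.card : WithBot ℕ) := by
    have hdc : (L.comp (C c' * X)).degree = (C c' * L).degree := by
      rw [degree_eq_natDegree hcompne, degree_eq_natDegree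
        (mul_ne_zero (fun h => hc0 (C_eq_zero.mp h)) (LW_monic W).ne_zero),
        natDegree_comp, natDegree_mul (fun h => hc0 (C_eq_zero.mp h)) (LW_monic W).ne_zero,
        natDegree_mul (fun h => hc0 (C_eq_zero.mp h)) X_ne_zero]
      simp
      rfl
    have hlc : (L.comp (C c' * X)).leadingCoeff = (C c' * L).leadingCoeff := by
      rw [leadingCoeff_comp (by
        rw [natDegree_mul (fun h => hc0 (C_eq_zero.mp h)) X_ne_zero]; simp),
        leadingCoeff_mul, leadingCoeff_C, (LW_monic W).leadingCoeff]
      simp only [leadingCoeff_mul, leadingCoeff_C, leadingCoeff_X, (LW_monic W).leadingCoeff,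
        one_mul, mul_one]
      rw [hLd, LW_natDegree, ← hWt]
      rw [(LW_monic W).leadingCoeff, mul_one]
      exact hcpow
    have h2 : g.degree < (C c' * L).degree := by
      have := degree_sub_lt hdc hcompne hlc
      rwa [hdc] at this
    calc g.degree < (C c' * L).degree := h2
      _ ≤ (C c').degree + L.degree := degree_mul_le _ _
      _ ≤ 0 + L.degree := by gcongr; exact degree_C_le
      _ = (Wt.card : WithBot ℕ) := by rw [zero_add, LW_degree_eq]
  have hg0 : g = 0 := by
    rcases eq_or_ne g 0 with h | h
    · exact h
    · exact eq_zero_of_natDegree_lt_card_of_eval_eq_zero' g Wt hroots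
        ((natDegree_lt_iff_degree_lt h).mpr hgdeg)
  have := congrArg (eval x) hg0
  simp only [hg, eval_sub, eval_comp, eval_mul, eval_C, eval_X, eval_zero] at this
  linear_combination this

end Subspace

lemma factor_through {K V X Z : Type*} [Field K] [AddCommGroup V] [Module K V]
    [AddCommGroup X] [Module K X] [AddCommGroup Z] [Module K Z]
    (Φ : V →ₗ[K] X) (T : V →ₗ[K] Z) (hker : LinearMap.ker Φ ≤ LinearMap.ker T) :
    ∃ h : X →ₗ[K] Z, ∀ v, h (Φ v) = T v := by
  let e := Φ.quotKerEquivRange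
  let h₀ : LinearMap.range Φ →ₗ[K] Z :=
    ((LinearMap.ker Φ).liftQ T hker).comp e.symm.toLinearMap
  obtain ⟨h, hh⟩ := h₀.exists_extend
  refine ⟨h, fun v => ?_⟩
  have h1 : h (Φ v) = h₀ ⟨Φ v, LinearMap.mem_range_self Φ v⟩ := by
    have := congrFun (congrArg (fun (m : _ →ₗ[K] Z) => m.toFun) hh)
      ⟨Φ v, LinearMap.mem_range_self Φ v⟩
    simpa using this
  rw [h1]
  show ((LinearMap.ker Φ).liftQ T hker) (e.symm ⟨Φ v, _⟩) = T v
  have h2 : e.symm ⟨Φ v, LinearMap.mem_range_self Φ v⟩ = Submodule.Quotient.mk v := by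
    apply e.injective
    rw [e.apply_symm_apply]
    exact Subtype.ext (Φ.quotKerEquivRange_apply_mk v).symm
  rw [h2, Submodule.liftQ_apply]

lemma exists_span_range {K V : Type*} [Field K] [AddCommGroup V] [Module K V]
    [FiniteDimensional K V] (ℒ : V →ₗ[K] V) (n : ℕ)
    (hn : Module.finrank K (LinearMap.range ℒ) ≤ n) :
    ∃ e : Fin n → V,
      LinearMap.range ℒ ≤ Submodule.span K (Set.range (fun i => ℒ (e i))) := by
  classical
  set R := LinearMap.range ℒ with hR
  let b := Module.finBasis K R
  let e : Fin n → V := fun i =>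
    if h : (i : ℕ) < Module.finrank K R then
      (LinearMap.mem_range.mp (b ⟨i, h⟩).2).choose
    else 0
  refine ⟨e, ?_⟩
  have hbe : ∀ i' : Fin (Module.finrank K R),
      ℒ (e ⟨(i' : ℕ), lt_of_lt_of_le i'.2 hn⟩) = (b i' : V) := by
    intro i'
    have h : ((⟨(i' : ℕ), lt_of_lt_of_le i'.2 hn⟩ : Fin n) : ℕ) < Module.finrank K R := i'.2
    simp only [e, dif_pos h]
    rw [(LinearMap.mem_range.mp (b ⟨(i' : ℕ), h⟩).2).choose_spec]
  intro x hx
  have hx' : (⟨x, hx⟩ : R) ∈ Submodule.span K (Set.range b) := by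
    rw [b.span_eq]; trivial
  have hmap := Submodule.mem_map_of_mem (f := R.subtype) hx'
  rw [Submodule.map_span] at hmap
  refine Submodule.span_le.mpr ?_ hmap
  rintro _ ⟨_, ⟨i', rfl⟩, rfl⟩
  apply Submodule.subset_span
  exact ⟨⟨(i' : ℕ), lt_of_lt_of_le i'.2 hn⟩, hbe i'⟩

/-- Scheme 2 as an evaluation scheme: if `W ⊆ F` is a `B`-subspace of dimension `s`
(`0 < s < t`) and `d ≥ ℓ q^s - ℓ + k`, the Reed–Solomon code on the `ℓ + d` distinct
points `β 1, …, β ℓ, α 1, …, α d` admits a `B`-linear weighted-sum evaluation scheme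
with bandwidth `d (t - s)` sub-symbols of `B`: there are `B`-linear maps
`g_j : F → B^{t-s}` and a `B`-linear `h : (B^{t-s})^d → F` with
`h (g_1 (f α_1), …, g_d (f α_d)) = ∑_i κ_i f(β_i)` for all `f` of degree `≤ k - 1`. -/
theorem scheme2_exists_evaluation_scheme {B F : Type*} [Field B] [Fintype B]
    [Field F] [Algebra B F]
    (t s : ℕ) (ht : Module.finrank B F = t)
    (W : Submodule B F) (hWs : Module.finrank B W = s) (hs0 : 0 < s) (hst : s < t)
    (ℓ d k : ℕ) (hℓ : 0 < ℓ) (hd : 0 < d) (hk : 0 < k)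
    (hℓk : ℓ ≤ k) (hkℓd : k ≤ ℓ + d)
    (hdbig : ℓ * Fintype.card B ^ s - ℓ + k ≤ d)
    (β : Fin ℓ → F) (α : Fin d → F)
    (hinj : Function.Injective (Sum.elim β α))
    (κ : Fin ℓ → F) (hκ : ∀ i, κ i ≠ 0) :
    ∃ (g : Fin d → (F →ₗ[B] (Fin (t - s) → B))) (h : (Fin d → Fin (t - s) → B) →ₗ[B] F),
      ∀ f : Polynomial F, f.degree < (k : WithBot ℕ) →
        h (fun j => g j (f.eval (α j))) = ∑ i, κ i * f.eval (β i) := by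
  classical
  have hq2 : 2 ≤ Fintype.card B := Fintype.one_lt_card
  have hfd : FiniteDimensional B F := FiniteDimensional.of_finrank_pos (by rw [ht]; omega)
  haveI : Finite F := Module.finite_of_finite B
  haveI : Fintype F := Fintype.ofFinite F
  -- cardinality of W
  have hWcard : (Set.toFinset (W : Set F)).card = Fintype.card B ^ s := by
    rw [Set.toFinset_card]
    rw [show Fintype.card ↥(W : Set F) = Fintype.card ↥W from Fintype.card_congr (Equiv.refl _)]
    rw [Module.card_eq_pow_finrank (K := B) (V := ↥W), hWs]
  set Q := Fintype.card B ^ s with hQ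
  have hQ1 : 1 ≤ Q := Nat.one_le_pow _ _ (by omega)
  -- the linearized map
  set L : Polynomial F := LW W with hLdef
  let ℒ : F →ₗ[B] F :=
    { toFun := fun x => L.eval x
      map_add' := LW_eval_add W
      map_smul' := by
        intro c x
        simp only [RingHom.id_apply]
        rw [Algebra.smul_def, Algebra.smul_def]
        exact LW_eval_smul W s hWcard c x }
  have hℒ : ∀ x, ℒ x = L.eval x := fun _ => rfl
  have hWker : W ≤ LinearMap.ker ℒ := fun w hw =>
    LinearMap.mem_ker.mpr (LW_eval_mem W hw)
  have hrank : Module.finrank B (LinearMap.range ℒ) ≤ t - s := by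
    have h1 := LinearMap.finrank_range_add_finrank_ker ℒ
    have h2 : s ≤ Module.finrank B (LinearMap.ker ℒ) := hWs ▸ Submodule.finrank_mono hWker
    rw [ht] at h1; omega
  obtain ⟨e, he⟩ := exists_span_range ℒ (t - s) hrank
  -- a nonzero functional
  let bF := Module.finBasis B F
  have hfr : 0 < Module.finrank B F := by rw [ht]; omega
  let i0 : Fin (Module.finrank B F) := ⟨0, hfr⟩
  let φ : F →ₗ[B] B := bF.coord i0
  have hφ : φ (bF i0) = 1 := by simp [φ, bF]
  -- evaluation points
  set v : (Fin ℓ ⊕ Fin d) → F := Sum.elim β α with hv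
  have hβα : ∀ i j, α j ≠ β i := by
    intro i j hc
    have : (Sum.inr j : Fin ℓ ⊕ Fin d) = Sum.inl i := hinj (by simpa [hv] using hc)
    simp at this
  have hβinj : Function.Injective β := fun i j hij => by
    have : (Sum.inl i : Fin ℓ ⊕ Fin d) = Sum.inl j := hinj (by simpa [hv] using hij)
    simpa using this
  set u : (Fin ℓ ⊕ Fin d) → F := fun m => ∏ m' ∈ univ.erase m, (v m - v m')⁻¹ with hu
  have hune : ∀ m, u m ≠ 0 := by
    intro m
    refine Finset.prod_ne_zero_iff.mpr fun m' hm' => ?_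
    exact inv_ne_zero (sub_ne_zero.mpr fun hc => (mem_erase.mp hm').1 (hinj hc).symm)
  -- M, π, r
  set M : Polynomial F := ∏ w ∈ (Set.toFinset (W : Set F)).erase 0, (X - C w) with hM
  have hLM : L = X * M := by
    rw [hLdef, LW, ← Finset.mul_prod_erase _ _ (Set.mem_toFinset.mpr W.zero_mem)]
    simp [hM]
  have hM0 : M.eval 0 ≠ 0 := by
    rw [hM, eval_prod]
    refine Finset.prod_ne_zero_iff.mpr fun w hw => ?_
    simp only [eval_sub, eval_X, eval_C]
    intro hc
    exact (mem_erase.mp hw).1 (by linear_combination -hc)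
  have hMdeg : M.natDegree = Q - 1 := by
    rw [hM, natDegree_prod _ _ (fun w _ => X_sub_C_ne_zero w)]
    simp [card_erase_of_mem (Set.mem_toFinset.mpr W.zero_mem), hWcard]
  set pb : Polynomial F := ∏ i : Fin ℓ, (X - C (β i)) with hpb
  have hpbβ : ∀ i, pb.eval (β i) = 0 := by
    intro i
    rw [hpb, eval_prod]
    exact Finset.prod_eq_zero (mem_univ i) (by simp)
  have hpbα : ∀ j, pb.eval (α j) ≠ 0 := by
    intro j
    rw [hpb, eval_prod]
    refine Finset.prod_ne_zero_iff.mpr fun i _ => ?_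
    simp only [eval_sub, eval_X, eval_C]
    exact sub_ne_zero.mpr (hβα i j)
  have hpbdeg : pb.natDegree = ℓ := by
    rw [hpb, natDegree_prod _ _ (fun i _ => X_sub_C_ne_zero (β i))]
    simp
  set r : Polynomial F :=
    Lagrange.interpolate univ β (fun i => κ i * (u (Sum.inl i))⁻¹ * (M.eval 0)⁻¹) with hr
  have hrβ : ∀ i, r.eval (β i) = κ i * (u (Sum.inl i))⁻¹ * (M.eval 0)⁻¹ := by
    intro i
    exact Lagrange.eval_interpolate_at_node _ hβinj.injOn (mem_univ i)
  have hrdeg : r.natDegree < ℓ := by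
    rcases eq_or_ne r 0 with h | h
    · rw [h, natDegree_zero]; omega
    · refine (natDegree_lt_iff_degree_lt h).mpr ?_
      have h2 := Lagrange.degree_interpolate_lt (s := (univ : Finset (Fin ℓ)))
        (fun i => κ i * (u (Sum.inl i))⁻¹ * (M.eval 0)⁻¹) hβinj.injOn
      rw [← hr] at h2
      simpa using h2
  set c : Fin d → F := fun j => u (Sum.inr j) * r.eval (α j) * (pb.eval (α j))⁻¹ with hc
  haveI : Nonempty (Fin ℓ ⊕ Fin d) := ⟨Sum.inl ⟨0, hℓ⟩⟩
  -- the key identity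
  have key : ∀ (γ : F) (f : Polynomial F), f.degree < (k : WithBot ℕ) →
      γ * (∑ i, κ i * f.eval (β i))
        + ∑ j, c j * ℒ (γ * pb.eval (α j)) * f.eval (α j) = 0 := by
    intro γ f hf
    set p : Polynomial F := r * C γ * (M.comp (C γ * pb)) with hp
    have hfnd : f.natDegree < k := by
      rcases eq_or_ne f 0 with h | h
      · rw [h, natDegree_zero]; omega
      · exact (natDegree_lt_iff_degree_lt h).mpr hf
    have hnd : (p * f).natDegree < ℓ + d - 1 := by
      have h1 : (p * f).natDegree ≤ p.natDegree + f.natDegree := natDegree_mul_le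
      have h2 : p.natDegree ≤ (r.natDegree + 0) + (Q - 1) * ℓ := by
        refine le_trans natDegree_mul_le (add_le_add ?_ ?_)
        · exact le_trans natDegree_mul_le (by simp)
        · refine le_trans natDegree_comp_le ?_
          rw [hMdeg]
          refine Nat.mul_le_mul_left _ ?_
          refine le_trans natDegree_mul_le ?_
          simp [hpbdeg]
      have h3 : (Q - 1) * ℓ + ℓ = Q * ℓ := by
        have hq : Q - 1 + 1 = Q := by omega
        calc (Q - 1) * ℓ + ℓ = (Q - 1 + 1) * ℓ := by ring
          _ = Q * ℓ := by rw [hq]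
      have h4 : ℓ ≤ ℓ * Q := Nat.le_mul_of_pos_right _ (by omega)
      have h5 : Q * ℓ = ℓ * Q := Nat.mul_comm _ _
      omega
    have hdegP : (p * f).degree
        < ((Fintype.card (Fin ℓ ⊕ Fin d) - 1 : ℕ) : WithBot ℕ) := by
      have hcardι : Fintype.card (Fin ℓ ⊕ Fin d) = ℓ + d := by simp
      refine lt_of_le_of_lt degree_le_natDegree ?_
      rw [hcardι]
      exact_mod_cast Nat.cast_lt.mpr hnd
    have h0 := lagrangeA v hinj (p * f) hdegP
    rw [Fintype.sum_sum_type] at h0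
    have e1 : ∀ i, (p * f).eval (v (Sum.inl i)) * u (Sum.inl i)
        = γ * (κ i * f.eval (β i)) := by
      intro i
      show (p * f).eval (β i) * u (Sum.inl i) = γ * (κ i * f.eval (β i))
      rw [hp]
      simp only [eval_mul, eval_comp, eval_C]
      rw [hpbβ i, mul_zero, hrβ i]
      have h1 := hune (Sum.inl i)
      field_simp
    have e2 : ∀ j, (p * f).eval (v (Sum.inr j)) * u (Sum.inr j)
        = c j * ℒ (γ * pb.eval (α j)) * f.eval (α j) := by
      intro j
      show (p * f).eval (α j) * u (Sum.inr j) = c j * ℒ (γ * pb.eval (α j)) * f.eval (α j)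
      rw [hp, hℒ, hLM, hc]
      simp only [eval_mul, eval_comp, eval_C, eval_X]
      have h1 := hpbα j
      field_simp
    calc γ * (∑ i, κ i * f.eval (β i))
          + ∑ j, c j * ℒ (γ * pb.eval (α j)) * f.eval (α j)
        = (∑ i, (p * f).eval (v (Sum.inl i)) * u (Sum.inl i))
          + ∑ j, (p * f).eval (v (Sum.inr j)) * u (Sum.inr j) := by
          rw [Finset.mul_sum]
          congr 1
          · exact Finset.sum_congr rfl fun i _ => (e1 i).symm
          · exact Finset.sum_congr rfl fun j _ => (e2 j).symm
      _ = 0 := h0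
  -- the compression maps
  let g : Fin d → (F →ₗ[B] (Fin (t - s) → B)) := fun j =>
    LinearMap.pi (fun rr => φ ∘ₗ (LinearMap.mulLeft B (c j * ℒ (e rr))))
  -- the ambient space of polynomials
  let V' : Submodule B (Polynomial F) := (Polynomial.degreeLT F k).restrictScalars B
  let Φ : V' →ₗ[B] (Fin d → Fin (t - s) → B) :=
    LinearMap.pi (fun j => (g j) ∘ₗ ((Polynomial.leval (α j)).restrictScalars B) ∘ₗ V'.subtype)
  let T : V' →ₗ[B] F :=
    (∑ i : Fin ℓ, (LinearMap.mulLeft B (κ i)) ∘ₗ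
      ((Polynomial.leval (β i)).restrictScalars B)) ∘ₗ V'.subtype
  have hT : ∀ fv : V', T fv = ∑ i, κ i * (fv : Polynomial F).eval (β i) := by
    intro fv
    simp [T, LinearMap.sum_apply, LinearMap.mulLeft_apply, Polynomial.leval_apply]
  have hΦ : ∀ (fv : V') (j : Fin d) (rr : Fin (t - s)),
      Φ fv j rr = φ (c j * ℒ (e rr) * (fv : Polynomial F).eval (α j)) := by
    intro fv j rr
    simp [Φ, g, LinearMap.pi_apply, LinearMap.mulLeft_apply, Polynomial.leval_apply,
      mul_assoc]
  have hker : LinearMap.ker Φ ≤ LinearMap.ker T := by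
    intro fv hfv
    rw [LinearMap.mem_ker] at hfv ⊢
    have h1 : ∀ (j : Fin d) (rr : Fin (t - s)),
        φ (c j * ℒ (e rr) * (fv : Polynomial F).eval (α j)) = 0 := by
      intro j rr
      rw [← hΦ fv j rr, hfv]
      rfl
    have h2 : ∀ (j : Fin d) (z : F), z ∈ LinearMap.range ℒ →
        φ (c j * z * (fv : Polynomial F).eval (α j)) = 0 := by
      intro j z hz
      let ψ : F →ₗ[B] B := φ ∘ₗ LinearMap.mulLeft B (c j * (fv : Polynomial F).eval (α j))
      have hsub : Submodule.span B (Set.range fun i => ℒ (e i)) ≤ LinearMap.ker ψ := by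
        refine Submodule.span_le.mpr ?_
        rintro _ ⟨i, rfl⟩
        rw [SetLike.mem_coe, LinearMap.mem_ker]
        show φ (c j * (fv : Polynomial F).eval (α j) * ℒ (e i)) = 0
        rw [show c j * (fv : Polynomial F).eval (α j) * ℒ (e i)
          = c j * ℒ (e i) * (fv : Polynomial F).eval (α j) by ring]
        exact h1 j i
      have := hsub (he hz)
      rw [LinearMap.mem_ker] at this
      show φ (c j * z * _) = 0
      rw [show c j * z * (fv : Polynomial F).eval (α j)
        = c j * (fv : Polynomial F).eval (α j) * z by ring]
      exact this
    have hfdeg : (fv : Polynomial F).degree < (k : WithBot ℕ) :=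
      Polynomial.mem_degreeLT.mp ((Submodule.restrictScalars_mem B _ _).mp fv.2)
    set S : F := ∑ i, κ i * (fv : Polynomial F).eval (β i) with hS
    have hφS : ∀ γ : F, φ (γ * S) = 0 := by
      intro γ
      have hkey := key γ (fv : Polynomial F) hfdeg
      have hγS : γ * S = - ∑ j, c j * ℒ (γ * pb.eval (α j)) * (fv : Polynomial F).eval (α j) := by
        rw [hS]; linear_combination hkey
      rw [hγS, map_neg, map_sum]
      rw [Finset.sum_eq_zero fun j _ => h2 j (ℒ (γ * pb.eval (α j))) (LinearMap.mem_range_self ℒ _)]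
      simp
    have hS0 : S = 0 := by
      by_contra hS0
      have := hφS (bF i0 * S⁻¹)
      rw [mul_assoc, inv_mul_cancel₀ hS0, mul_one] at this
      rw [hφ] at this
      exact one_ne_zero this
    rw [hT fv, ← hS, hS0]
  obtain ⟨h, hh⟩ := factor_through Φ T hker
  refine ⟨g, h, fun f hfdeg => ?_⟩
  have hfV : f ∈ V' :=
    (Submodule.restrictScalars_mem B _ _).mpr (Polynomial.mem_degreeLT.mpr hfdeg)
  have := hh ⟨f, hfV⟩
  have hΦf : Φ ⟨f, hfV⟩ = fun j => g j (f.eval (α j)) := by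
    funext j
    simp [Φ, LinearMap.pi_apply, Polynomial.leval_apply]
  rw [hΦf] at this
  rw [this, hT]
end

section
/- Let B be a finite field with q = |B| elements and let F be a field extension of B of degree t. Let β_1, …, β_ℓ, α_1, …, α_d be ℓ + d pairwise distinct elements of F, and let p_1, …, p_t ∈ F[x] be polynomials. For x = (x_1,…,x_t) ∈ B^t write p_x = x_1 p_1 + ⋯ + x_t p_t. Assume that for each i ∈ [ℓ], the t values p_1(β_i), …, p_t(β_i) are linearly independent over B. For j ∈ [d] let b_j = dim_B span_B{p_1(α_j), …, p_t(α_j)}. Then ∑_{x ∈ B^t ∖ {0}} #{ ω ∈ {β_1,…,β_ℓ, α_1,…,α_d} : p_x(ω) = 0 } = ∑_{j=1}^d ( q^{t − b_j} − 1 ). -/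
open Finset Polynomial

/-- The double-counting identity (Lemma 8): with `p_x = ∑_m x_m p_m` for `x ∈ B^t`,
if the values `p_1(β_i), …, p_t(β_i)` are `B`-linearly independent for each `i`, then
`∑_{x ∈ B^t ∖ {0}} #{ω ∈ {β_1,…,β_ℓ,α_1,…,α_d} : p_x(ω) = 0}
  = ∑_{j=1}^d (q^{t - b_j} - 1)`, where
`b_j = dim_B span_B {p_1(α_j),…,p_t(α_j)}` and `q = |B|`. -/
theorem omega_double_counting {B F : Type*} [Field B] [Fintype B] [DecidableEq B]
    [Field F] [DecidableEq F] [Algebra B F]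
    (t : ℕ) (ht : Module.finrank B F = t)
    (ℓ d : ℕ) (hℓ : 0 < ℓ) (hd : 0 < d)
    (β : Fin ℓ → F) (α : Fin d → F)
    (hinj : Function.Injective (Sum.elim β α))
    (p : Fin t → Polynomial F)
    (hindep : ∀ i : Fin ℓ, LinearIndependent B (fun m : Fin t => (p m).eval (β i))) :
    ∑ x ∈ (Finset.univ : Finset (Fin t → B)).filter (· ≠ 0),
      ((Finset.univ.filter (fun ωi : Fin ℓ ⊕ Fin d =>
        (∑ m : Fin t, Polynomial.C (algebraMap B F (x m)) * p m).eval
          (Sum.elim β α ωi) = 0)).card)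
    = ∑ j : Fin d,
        (Fintype.card B ^
          (t - Module.finrank B
            (Submodule.span B (Set.range fun m : Fin t => (p m).eval (α j)))) - 1) := by
  classical
  have heval : ∀ (x : Fin t → B) (ω : F),
      (∑ m : Fin t, Polynomial.C (algebraMap B F (x m)) * p m).eval ω
        = ∑ m : Fin t, x m • (p m).eval ω := by
    intro x ω
    rw [eval_finset_sum]
    simp [Algebra.smul_def]
  have hswap :
      ∑ x ∈ (Finset.univ : Finset (Fin t → B)).filter (· ≠ 0),
        ((Finset.univ.filter (fun ωi : Fin ℓ ⊕ Fin d =>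
          (∑ m : Fin t, Polynomial.C (algebraMap B F (x m)) * p m).eval
            (Sum.elim β α ωi) = 0)).card)
      = ∑ ωi : Fin ℓ ⊕ Fin d,
          (((Finset.univ : Finset (Fin t → B)).filter
            (fun x => x ≠ 0 ∧ ∑ m : Fin t, x m • (p m).eval (Sum.elim β α ωi) = 0)).card) := by
    simp_rw [Finset.card_filter, heval]
    rw [Finset.sum_comm]
    refine Finset.sum_congr rfl fun ωi _ => ?_
    rw [Finset.sum_filter]
    simp [ite_and]
  rw [hswap, Fintype.sum_sum_type]
  have hβ : ∀ i : Fin ℓ,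
      (((Finset.univ : Finset (Fin t → B)).filter
        (fun x => x ≠ 0 ∧ ∑ m : Fin t, x m • (p m).eval (Sum.elim β α (Sum.inl i)) = 0)).card) = 0 := by
    intro i
    rw [Finset.card_eq_zero, Finset.filter_eq_empty_iff]
    rintro x - ⟨hx, hsum⟩
    exact hx (funext fun m => Fintype.linearIndependent_iff.mp (hindep i) x hsum m)
  rw [Finset.sum_congr rfl (fun i _ => hβ i)]
  simp only [Finset.sum_const, smul_zero, zero_add, Sum.elim_inr]
  refine Finset.sum_congr rfl fun j _ => ?_
  set v : Fin t → F := fun m => (p m).eval (α j) with hv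
  set f := Fintype.linearCombination B v with hf
  have hfx : ∀ x : Fin t → B, f x = ∑ m : Fin t, x m • v m := fun x => rfl
  have hfilter :
      ((Finset.univ : Finset (Fin t → B)).filter
        (fun x => x ≠ 0 ∧ ∑ m : Fin t, x m • v m = 0))
      = ((Finset.univ : Finset (Fin t → B)).filter (fun x => f x = 0)).erase 0 := by
    ext x
    simp [hfx, and_comm]
  have h0mem : (0 : Fin t → B) ∈
      (Finset.univ : Finset (Fin t → B)).filter (fun x => f x = 0) := by
    simp
  have hcardker :
      ((Finset.univ : Finset (Fin t → B)).filter (fun x => f x = 0)).card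
        = Fintype.card (LinearMap.ker f) := by
    rw [Fintype.card_subtype]
    congr 1
    ext x
    simp [LinearMap.mem_ker]
  have hrange : LinearMap.range f = Submodule.span B (Set.range v) :=
    Fintype.range_linearCombination B v
  have hrk := LinearMap.finrank_range_add_finrank_ker f
  rw [hrange, Module.finrank_fin_fun] at hrk
  have hker : Module.finrank B (LinearMap.ker f)
      = t - Module.finrank B (Submodule.span B (Set.range v)) := Nat.eq_sub_of_add_eq' hrk
  have hcardpow : Fintype.card (LinearMap.ker f)
      = Fintype.card B ^ Module.finrank B (LinearMap.ker f) := Module.card_eq_pow_finrank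
  have hc := congrArg Finset.card hfilter
  rw [Finset.card_erase_of_mem h0mem, hcardker, hcardpow, hker] at hc
  exact hc
end

section
/- Let q ≥ 2 and t ≥ 1 be integers, d ≥ 1 an integer, and L a real number with d·q^{−t} ≤ L ≤ d and such that log_q(d/L) is not an integer. Set n_0 = ⌊ (L − d·q^{−⌈log_q(d/L)⌉}) / (q^{−⌊log_q(d/L)⌋} − q^{−⌈log_q(d/L)⌉}) ⌋. Then for any integers b_1, …, b_d ∈ {0, 1, …, t} satisfying ∑_{i=1}^d q^{−b_i} ≤ L, one has ∑_{i=1}^d b_i ≥ n_0 · ⌊log_q(d/L)⌋ + (d − n_0) · ⌈log_q(d/L)⌉. Moreover this bound is attained: the assignment b_1 = ⋯ = b_{n_0} = ⌊log_q(d/L)⌋ and b_{n_0+1} = ⋯ = b_d = ⌈log_q(d/L)⌉ is feasible. -/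
open Finset Real

-- Bernoulli-type bound: 1 + j(Q-1) ≤ Q^j for all integers j, when Q ≥ 2.
private lemma bern_int (Q : ℝ) (hQ : 2 ≤ Q) (j : ℤ) : 1 + j * (Q - 1) ≤ Q ^ j := by
  have hQ0 : (0:ℝ) < Q := by linarith
  rcases le_or_gt 0 j with hj | hj
  · lift j to ℕ using hj
    have h := one_add_mul_le_pow (a := Q - 1) (by linarith) j
    rw [zpow_natCast]
    have e : (1 + (Q-1)) = Q := by ring
    rw [e] at h
    push_cast
    linarith
  · have hj' : j ≤ -1 := by omega
    have hj1 : (j:ℝ) ≤ -1 := by exact_mod_cast hj'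
    have h1 : (j:ℝ) * (Q - 1) ≤ j := by nlinarith
    have h2 := zpow_pos hQ0 j
    linarith

-- Secant line bound: the chord of Q^(-·) through exponents fl, fl+1 lies below
-- the function at all integers.
private lemma key (Q : ℝ) (hQ : 2 ≤ Q) (fl m : ℤ) :
    Q ^ (-(fl+1)) + (((fl:ℝ)+1) - m) * (Q ^ (-fl) - Q ^ (-(fl+1))) ≤ Q ^ (-m) := by
  have hQ0 : (0:ℝ) < Q := by linarith
  have hc : (0:ℝ) < Q ^ (-(fl+1)) := zpow_pos hQ0 _
  have h1 : Q ^ (-fl) = Q ^ (-(fl+1)) * Q := by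
    rw [← zpow_add_one₀ (ne_of_gt hQ0)]; congr 1; ring
  have h2 : Q ^ (-m) = Q ^ (-(fl+1)) * Q ^ (fl + 1 - m) := by
    rw [← zpow_add₀ (ne_of_gt hQ0)]; congr 1; ring
  have hb := bern_int Q hQ (fl + 1 - m)
  have hmul := mul_le_mul_of_nonneg_left hb (le_of_lt hc)
  rw [h1, h2]
  push_cast at hmul ⊢
  nlinarith [hmul]

private lemma sum_ite_lt (A B : ℝ) (m d : ℕ) (h : m ≤ d) :
    ∑ j ∈ Finset.range d, (if j < m then A else B) = m * A + ((d - m : ℕ)) * B := by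
  rw [Finset.sum_ite, Finset.sum_const, Finset.sum_const]
  have h1 : Finset.filter (fun j => j < m) (Finset.range d) = Finset.range m := by
    ext j; simp; omega
  have h2 : Finset.filter (fun j => ¬ j < m) (Finset.range d) = Finset.Ico m d := by
    ext j; simp [Finset.mem_Ico]; omega
  rw [h1, h2, Finset.card_range, Nat.card_Ico]
  simp [nsmul_eq_mul]

/-- Exact solution of the integer program
`min { ∑ b_i : b_i ∈ {0,…,t}, ∑ q^{-b_i} ≤ L }`: with
`fl = ⌊log_q(d/L)⌋`, `cl = ⌈log_q(d/L)⌉` and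
`n₀ = ⌊(L - d q^{-cl}) / (q^{-fl} - q^{-cl})⌋`, every feasible `b` satisfies
`∑ b_i ≥ n₀ fl + (d - n₀) cl`, and the assignment with `n₀` entries equal to `fl`
and the rest equal to `cl` is feasible and attains this value. -/
theorem integral_bandwidth_bound (q t d : ℕ) (hq : 2 ≤ q) (ht : 1 ≤ t) (hd : 1 ≤ d)
    (L : ℝ) (hL1 : (d : ℝ) * (q : ℝ) ^ (-(t : ℤ)) ≤ L) (hL2 : L ≤ d)
    (hnotint : ¬ ∃ z : ℤ, Real.logb q ((d : ℝ) / L) = z)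
    (fl cl n₀ : ℤ)
    (hfl : fl = ⌊Real.logb q ((d : ℝ) / L)⌋)
    (hcl : cl = ⌈Real.logb q ((d : ℝ) / L)⌉)
    (hn₀ : n₀ = ⌊(L - (d : ℝ) * (q : ℝ) ^ (-cl)) /
      ((q : ℝ) ^ (-fl) - (q : ℝ) ^ (-cl))⌋) :
    (∀ b : Fin d → ℕ, (∀ i, b i ≤ t) →
        (∑ i, (q : ℝ) ^ (-(b i : ℤ))) ≤ L →
        n₀ * fl + ((d : ℤ) - n₀) * cl ≤ ∑ i, (b i : ℤ)) ∧
    ∃ b : Fin d → ℕ,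
      (∀ i : Fin d, (b i : ℤ) = if ((i : ℕ) : ℤ) < n₀ then fl else cl) ∧
      (∀ i, b i ≤ t) ∧
      (∑ i, (q : ℝ) ^ (-(b i : ℤ))) ≤ L := by
  have hQ2 : (2:ℝ) ≤ (q:ℝ) := by exact_mod_cast hq
  have hQ0 : (0:ℝ) < (q:ℝ) := by linarith
  have hQ1 : (1:ℝ) < (q:ℝ) := by linarith
  have hd0 : (0:ℝ) < (d:ℝ) := by exact_mod_cast hd
  have hL0 : 0 < L := lt_of_lt_of_le (by positivity) hL1
  have hr0 : 0 < (d:ℝ)/L := by positivity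
  set x := Real.logb q ((d:ℝ)/L) with hxdef
  have hqx : (q:ℝ) ^ x = (d:ℝ)/L := Real.rpow_logb hQ0 (by linarith) hr0
  have hne : ∀ z : ℤ, x ≠ (z:ℝ) := fun z h => hnotint ⟨z, h⟩
  have hxfl : ((⌊x⌋:ℤ):ℝ) < x :=
    lt_of_le_of_ne (Int.floor_le x) (fun h => hne ⌊x⌋ h.symm)
  have hxcl : x < ((⌈x⌉:ℤ):ℝ) := lt_of_le_of_ne (Int.le_ceil x) (hne _)
  have hflcl : ⌊x⌋ < ⌈x⌉ := by exact_mod_cast hxfl.trans hxcl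
  have hclfl : cl = fl + 1 := by
    have h1 := Int.ceil_le_floor_add_one x
    rw [hfl, hcl]; omega
  -- zpow bounds on d/L
  have hflr : (q:ℝ) ^ fl < (d:ℝ)/L := by
    have h := (Real.rpow_lt_rpow_left_iff hQ1).2 (hfl ▸ hxfl)
    rwa [Real.rpow_intCast, hqx] at h
  have hclr : (d:ℝ)/L < (q:ℝ) ^ cl := by
    have h := (Real.rpow_lt_rpow_left_iff hQ1).2 (hcl ▸ hxcl)
    rwa [Real.rpow_intCast, hqx] at h
  have hzcl : (0:ℝ) < (q:ℝ) ^ cl := zpow_pos hQ0 _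
  have hzfl : (0:ℝ) < (q:ℝ) ^ fl := zpow_pos hQ0 _
  have hecl : (q:ℝ) ^ (-cl) * (q:ℝ) ^ cl = 1 := by
    rw [← zpow_add₀ (ne_of_gt hQ0)]; simp
  have hefl : (q:ℝ) ^ (-fl) * (q:ℝ) ^ fl = 1 := by
    rw [← zpow_add₀ (ne_of_gt hQ0)]; simp
  have hzncl : (0:ℝ) < (q:ℝ) ^ (-cl) := zpow_pos hQ0 _
  have hznfl : (0:ℝ) < (q:ℝ) ^ (-fl) := zpow_pos hQ0 _
  have hcl' : (d:ℝ) * (q:ℝ) ^ (-cl) < L := by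
    have h := (div_lt_iff₀ hL0).1 hclr
    nlinarith
  have hfl' : L < (d:ℝ) * (q:ℝ) ^ (-fl) := by
    have h := (lt_div_iff₀ hL0).1 hflr
    nlinarith
  have hΔ : (0:ℝ) < (q:ℝ) ^ (-fl) - (q:ℝ) ^ (-cl) := by
    have : (q:ℝ) ^ (-cl) < (q:ℝ) ^ (-fl) :=
      zpow_lt_zpow_right₀ hQ1 (by omega)
    linarith
  have hn0pos : 0 ≤ n₀ := by
    rw [hn₀]
    exact Int.floor_nonneg.2 (div_nonneg (by linarith) (le_of_lt hΔ))
  have hn0d : n₀ < (d:ℤ) := by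
    rw [hn₀]
    refine Int.floor_lt.2 ?_
    rw [div_lt_iff₀ hΔ]
    push_cast
    nlinarith
  have hx0 : 0 ≤ x := Real.logb_nonneg hQ1 ((one_le_div hL0).2 hL2)
  have hfl0 : 0 ≤ fl := hfl ▸ Int.floor_nonneg.2 hx0
  have hcl0 : 0 ≤ cl := by omega
  have hxt : x ≤ (t:ℝ) := by
    rw [hxdef, Real.logb_le_iff_le_rpow hQ1 hr0, div_le_iff₀ hL0]
    have hP : (q:ℝ) ^ ((t:ℕ):ℝ) = (q:ℝ) ^ (t:ℤ) := by
      rw [Real.rpow_natCast, zpow_natCast]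
    rw [hP]
    have he : (q:ℝ) ^ (-(t:ℤ)) * (q:ℝ) ^ (t:ℤ) = 1 := by
      rw [← zpow_add₀ (ne_of_gt hQ0)]; simp
    have hz : (0:ℝ) < (q:ℝ) ^ (t:ℤ) := zpow_pos hQ0 _
    nlinarith
  have hclt : cl ≤ (t:ℤ) := hcl ▸ Int.ceil_le.2 (by exact_mod_cast hxt)
  constructor
  · intro b hbt hbL
    set S : ℤ := ∑ i, (b i : ℤ) with hS
    have hpt : ∀ i ∈ Finset.univ, (q:ℝ) ^ (-cl) + (((fl:ℝ)+1) - (b i : ℤ)) *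
        ((q:ℝ) ^ (-fl) - (q:ℝ) ^ (-cl)) ≤ (q:ℝ) ^ (-(b i : ℤ)) := by
      intro i _
      have h := key (q:ℝ) hQ2 fl (b i)
      rw [hclfl]
      convert h using 3
    have hsum := Finset.sum_le_sum hpt
    have heval : ∑ i : Fin d, ((q:ℝ) ^ (-cl) + (((fl:ℝ)+1) - (b i : ℤ)) *
        ((q:ℝ) ^ (-fl) - (q:ℝ) ^ (-cl)))
        = (d:ℝ) * (q:ℝ) ^ (-cl) + ((d:ℝ)*((fl:ℝ)+1) - (S:ℝ)) *
          ((q:ℝ) ^ (-fl) - (q:ℝ) ^ (-cl)) := by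
      have e : ∀ i : Fin d, (q:ℝ) ^ (-cl) + (((fl:ℝ)+1) - (b i : ℤ)) *
          ((q:ℝ) ^ (-fl) - (q:ℝ) ^ (-cl))
          = ((q:ℝ) ^ (-cl) + ((fl:ℝ)+1) * ((q:ℝ) ^ (-fl) - (q:ℝ) ^ (-cl)))
            - ((q:ℝ) ^ (-fl) - (q:ℝ) ^ (-cl)) * ((b i : ℤ):ℝ) := fun i => by ring
      simp_rw [e]
      rw [Finset.sum_sub_distrib, Finset.sum_const, ← Finset.mul_sum,
        Finset.card_univ, Fintype.card_fin]
      have hScast : ((S:ℤ):ℝ) = ∑ i : Fin d, ((b i : ℤ):ℝ) := by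
        rw [hS]; push_cast; ring
      rw [← hScast]
      ring
    rw [heval] at hsum
    have hLe := hsum.trans hbL
    have h2 : (((d:ℤ)*(fl+1) - S : ℤ):ℝ) ≤ (L - (d:ℝ)*(q:ℝ) ^ (-cl)) /
        ((q:ℝ) ^ (-fl) - (q:ℝ) ^ (-cl)) := by
      rw [le_div_iff₀ hΔ]
      push_cast
      linarith
    have h3 : (d:ℤ)*(fl+1) - S ≤ n₀ := hn₀ ▸ Int.le_floor.2 h2
    have hgoal : n₀ * fl + ((d:ℤ) - n₀) * cl = (d:ℤ)*(fl+1) - n₀ := by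
      rw [hclfl]; ring
    rw [hgoal]
    linarith
  · refine ⟨fun i => if ((i:ℕ):ℤ) < n₀ then fl.toNat else cl.toNat, ?_, ?_, ?_⟩
    · intro i
      by_cases h : ((i:ℕ):ℤ) < n₀ <;>
        simp [h, Int.toNat_of_nonneg hfl0, Int.toNat_of_nonneg hcl0]
    · intro i
      by_cases h : ((i:ℕ):ℤ) < n₀ <;> simp [h] <;> omega
    · have hbi : ∀ i : Fin d,
          (q:ℝ) ^ (-(((if ((i:ℕ):ℤ) < n₀ then fl.toNat else cl.toNat : ℕ)):ℤ))
          = if ((i:ℕ):ℤ) < n₀ then (q:ℝ) ^ (-fl) else (q:ℝ) ^ (-cl) := by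
        intro i
        by_cases h : ((i:ℕ):ℤ) < n₀ <;>
          simp [h, Int.toNat_of_nonneg hfl0, Int.toNat_of_nonneg hcl0]
      simp_rw [hbi]
      rw [Fin.sum_univ_eq_sum_range (fun j => if ((j:ℕ):ℤ) < n₀ then (q:ℝ) ^ (-fl) else (q:ℝ) ^ (-cl))]
      have hcond : ∀ j : ℕ, (((j:ℕ):ℤ) < n₀) = (j < n₀.toNat) := by
        intro j; simp [Int.lt_toNat]
      simp_rw [hcond]
      rw [sum_ite_lt _ _ _ _ (by omega : n₀.toNat ≤ d)]
      have hfloor : (n₀:ℝ) ≤ (L - (d:ℝ) * (q:ℝ) ^ (-cl)) /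
          ((q:ℝ) ^ (-fl) - (q:ℝ) ^ (-cl)) := by
        rw [hn₀]; exact Int.floor_le _
      have hmul : (n₀:ℝ) * ((q:ℝ) ^ (-fl) - (q:ℝ) ^ (-cl)) ≤
          L - (d:ℝ) * (q:ℝ) ^ (-cl) := (le_div_iff₀ hΔ).1 hfloor
      have hc1 : ((n₀.toNat : ℕ):ℝ) = (n₀:ℝ) := by
        exact_mod_cast congrArg (fun z : ℤ => (z:ℝ)) (Int.toNat_of_nonneg hn0pos)
      have hc2 : (((d - n₀.toNat : ℕ)):ℝ) = (d:ℝ) - (n₀:ℝ) := by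
        have : n₀.toNat ≤ d := by omega
        push_cast [this]
        rw [hc1]
      rw [hc1, hc2]
      have hre : (n₀:ℝ) * (q:ℝ) ^ (-fl) + ((d:ℝ) - (n₀:ℝ)) * (q:ℝ) ^ (-cl)
          = (d:ℝ) * (q:ℝ) ^ (-cl) + (n₀:ℝ) * ((q:ℝ) ^ (-fl) - (q:ℝ) ^ (-cl)) := by
        ring
      rw [hre]
      linarith
end

section
/- Let B be a finite field and F a field extension of B of degree t. Let ℓ, d, k be positive integers with ℓ ≤ k ≤ ℓ + d − 1, let β_1, …, β_ℓ, α_1, …, α_d be ℓ + d pairwise distinct elements of F, let κ_1, …, κ_ℓ ∈ F be nonzero, and let C = RS({β_1,…,β_ℓ,α_1,…,α_d}, k). Set L = ( (|F| − 1)(ℓ + d − k − 1) + d ) / |F|, and suppose log_{|B|}(d/L) is not an integer; set n_0 = ⌊ (L − d·|B|^{−⌈log_{|B|}(d/L)⌉}) / (|B|^{−⌊log_{|B|}(d/L)⌋} − |B|^{−⌈log_{|B|}(d/L)⌉}) ⌋ and b_min = n_0·⌊log_{|B|}(d/L)⌋ + (d − n_0)·⌈log_{|B|}(d/L)⌉.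 Then every B-linear (κ, C)-weighted-sum evaluation scheme has bandwidth at least b_min: if g_j : F → B^{b_j} (j ∈ [d]) are B-linear maps and h : B^{b_1} × ⋯ × B^{b_d} → F is a B-linear map with h(g_1(c_{ℓ+1}), …, g_d(c_{ℓ+d})) = ∑_{i=1}^ℓ κ_i c_i for every codeword c ∈ C, then ∑_{j=1}^d b_j ≥ b_min. -/
open Finset Polynomial Real

lemma leadingCoeff_lagrange_basis {F : Type*} [Field F] {ι : Type*} [DecidableEq ι]
    {s : Finset ι} {v : ι → F} {i : ι} :
    (Lagrange.basis s v i).leadingCoeff = Lagrange.nodalWeight s v i := by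
  rw [Lagrange.basis, leadingCoeff_prod, Lagrange.nodalWeight]
  refine Finset.prod_congr rfl fun j hj => ?_
  rw [Lagrange.basisDivisor, leadingCoeff_mul, leadingCoeff_X_sub_C, leadingCoeff_C, mul_one]

lemma residue_sum_eq_zero {F : Type*} [Field F] {ι : Type*} [DecidableEq ι]
    (s : Finset ι) (v : ι → F) (hvs : Set.InjOn v s)
    (P : F[X]) (hP : P.degree < ((s.card - 1 : ℕ) : WithBot ℕ)) :
    ∑ i ∈ s, Lagrange.nodalWeight s v i * P.eval (v i) = 0 := by
  have h1 : P.degree < (s.card : WithBot ℕ) := by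
    refine lt_of_lt_of_le hP ?_
    rw [Nat.cast_withBot, Nat.cast_withBot]
    exact WithBot.coe_le_coe.mpr (Nat.sub_le _ _)
  have hPi := Lagrange.eq_interpolate hvs h1
  have h0 : P.coeff (s.card - 1) = 0 := coeff_eq_zero_of_degree_lt hP
  rw [hPi, Lagrange.interpolate_apply, finset_sum_coeff] at h0
  rw [← h0]
  refine Finset.sum_congr rfl fun i hi => ?_
  rw [coeff_C_mul, ← Lagrange.natDegree_basis hvs hi, coeff_natDegree,
    leadingCoeff_lagrange_basis, mul_comm]

lemma dual_complete {F : Type*} [Field F] {ι : Type*} [DecidableEq ι] [Fintype ι]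
    (v : ι → F) (hv : Function.Injective v) (k : ℕ) (hk1 : 1 ≤ k)
    (hkn : k ≤ Fintype.card ι - 1)
    (w : ι → F)
    (hw : ∀ f : F[X], f.degree < (k : WithBot ℕ) → ∑ r, w r * f.eval (v r) = 0) :
    ∃ u : F[X], u.degree < ((Fintype.card ι - k : ℕ) : WithBot ℕ) ∧
      ∀ r, w r = Lagrange.nodalWeight Finset.univ v r * u.eval (v r) := by
  set n := Fintype.card ι with hn
  have hn2 : 2 ≤ n := by omega
  obtain ⟨S, hSsub, hScard⟩ := Finset.exists_subset_card_eq (s := (Finset.univ : Finset ι)) (n := n - k)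
    (by rw [Finset.card_univ]; omega)
  have hinjS : Set.InjOn v S := hv.injOn
  set u := Lagrange.interpolate S v (fun r => (Lagrange.nodalWeight Finset.univ v r)⁻¹ * w r)
    with hu
  have hnodez : ∀ r, Lagrange.nodalWeight Finset.univ v r ≠ 0 := fun r =>
    Lagrange.nodalWeight_ne_zero hv.injOn (Finset.mem_univ r)
  have hu_deg : u.degree < ((n - k : ℕ) : WithBot ℕ) := by
    have := Lagrange.degree_interpolate_lt
      (fun r => (Lagrange.nodalWeight Finset.univ v r)⁻¹ * w r) hinjS
    rwa [hScard] at this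
  set w' : ι → F := fun r => Lagrange.nodalWeight Finset.univ v r * u.eval (v r) with hw'
  have hagree : ∀ r ∈ S, w' r = w r := by
    intro r hr
    rw [hw']
    simp only [hu, Lagrange.eval_interpolate_at_node _ hinjS hr]
    rw [mul_inv_cancel_left₀ (hnodez r)]
  have hB : ∀ f : F[X], f.degree < (k : WithBot ℕ) → ∑ r, w' r * f.eval (v r) = 0 := by
    intro f hf
    have heq : ∀ r : ι, w' r * f.eval (v r) =
        Lagrange.nodalWeight Finset.univ v r * (u * f).eval (v r) := by
      intro r; simp only [hw', eval_mul]; ring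
    simp_rw [heq]
    refine residue_sum_eq_zero _ v hv.injOn _ ?_
    rw [Finset.card_univ, ← hn]
    by_cases hu0 : u = 0
    · simp [hu0]
    by_cases hf0 : f = 0
    · simp [hf0]
    have h1 : u.natDegree < n - k := (natDegree_lt_iff_degree_lt hu0).mpr hu_deg
    have h2 : f.natDegree < k := (natDegree_lt_iff_degree_lt hf0).mpr hf
    rw [degree_mul, degree_eq_natDegree hu0, degree_eq_natDegree hf0]
    rw [← Nat.cast_add, Nat.cast_withBot, Nat.cast_withBot, WithBot.coe_lt_coe]
    omega
  refine ⟨u, hu_deg, fun r => ?_⟩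
  by_cases hr : r ∈ S
  · exact (hagree r hr).symm
  · set fm := Lagrange.nodal ((Finset.univ \ S).erase r) v with hfm
    have hcard_sdiff : (Finset.univ \ S).card = k := by
      rw [Finset.card_sdiff_of_subset hSsub, Finset.card_univ, ← hn, hScard]; omega
    have hrmem : r ∈ Finset.univ \ S := Finset.mem_sdiff.mpr ⟨Finset.mem_univ r, hr⟩
    have hdeg_fm : fm.degree < (k : WithBot ℕ) := by
      rw [hfm, Lagrange.degree_nodal, Finset.card_erase_of_mem hrmem, hcard_sdiff]
      rw [Nat.cast_withBot, Nat.cast_withBot, WithBot.coe_lt_coe]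
      omega
    have h1 := hw fm hdeg_fm
    have h2 := hB fm hdeg_fm
    have key : ∑ x : ι, (w x - w' x) * fm.eval (v x) = 0 := by
      simp_rw [sub_mul, Finset.sum_sub_distrib, h1, h2, sub_zero]
    rw [Finset.sum_eq_single_of_mem r (Finset.mem_univ r) ?side] at key
    · have hfz : fm.eval (v r) ≠ 0 := by
        rw [hfm, Lagrange.eval_nodal]
        refine Finset.prod_ne_zero_iff.mpr fun j hj => ?_
        have hjr : j ≠ r := (Finset.mem_erase.mp hj).1
        exact sub_ne_zero_of_ne fun hh => hjr (hv hh).symm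
      exact sub_eq_zero.mp ((mul_eq_zero.mp key).resolve_right hfz)
    case side =>
      intro x _ hxr
      by_cases hxS : x ∈ S
      · rw [hagree x hxS]; ring
      · have hxmem : x ∈ (Finset.univ \ S).erase r :=
          Finset.mem_erase.mpr ⟨hxr, Finset.mem_sdiff.mpr ⟨Finset.mem_univ x, hxS⟩⟩
        rw [hfm, Lagrange.eval_nodal]
        rw [Finset.prod_eq_zero hxmem (sub_self (v x))]
        ring

lemma one_add_int_mul_le_zpow (x : ℝ) (hx : 0 < x) (m : ℤ) :
    1 + (m : ℝ) * (x - 1) ≤ x ^ m := by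
  have hx1 : (1 : ℝ) + (x - 1) = x := by ring
  induction m using Int.rec with
  | ofNat n =>
    have hber := one_add_mul_le_pow (a := x - 1) (by linarith) n
    rw [hx1] at hber
    simpa using hber
  | negSucc n =>
    have hy : (0:ℝ) < x⁻¹ := inv_pos.mpr hx
    have hy1 : (1 : ℝ) + (x⁻¹ - 1) = x⁻¹ := by ring
    have hber := one_add_mul_le_pow (a := x⁻¹ - 1) (by linarith) (n+1)
    rw [hy1] at hber
    have h2 : x ^ (Int.negSucc n) = (x⁻¹) ^ (n+1) := by
      rw [zpow_negSucc, inv_pow]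
    have hinv : x * x⁻¹ = 1 := mul_inv_cancel₀ hx.ne'
    have key : 0 ≤ x⁻¹ + x - 2 := by nlinarith [sq_nonneg (x - 1)]
    have hcast : (Int.negSucc n : ℝ) = -((n:ℝ)+1) := by
      rw [Int.cast_negSucc]; push_cast; ring
    rw [h2, hcast]
    push_cast at hber
    refine le_trans ?_ hber
    have expand : (0:ℝ) ≤ ((n:ℝ)+1) * (x⁻¹ + x - 2) := mul_nonneg (by positivity) key
    have hdiff : (1 + ((n:ℝ)+1)*(x⁻¹-1)) - (1 + (-((n:ℝ)+1)) * (x - 1))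
        = ((n:ℝ)+1) * (x⁻¹ + x - 2) := by ring
    linarith [expand, hdiff]

lemma bandwidth_opt {d : ℕ} (s L : ℝ) (hs : 2 ≤ s) (fl n₀ : ℤ) (b : Fin d → ℕ)
    (hn₀ : n₀ = ⌊(L - (d:ℝ) * s ^ (-(fl+1))) / (s ^ (-fl) - s ^ (-(fl+1)))⌋)
    (hsum : ∑ j, s ^ (-(b j : ℤ)) ≤ L) :
    n₀ * fl + ((d : ℤ) - n₀) * (fl + 1) ≤ ∑ j, (b j : ℤ) := by
  have hs0 : (0:ℝ) < s := by linarith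
  set A := s ^ (-fl) with hA
  set Bc := s ^ (-(fl+1)) with hB
  have hApos : 0 < A := zpow_pos hs0 _
  have hBpos : 0 < Bc := zpow_pos hs0 _
  have hDpos : 0 < A - Bc := by
    have : Bc < A := zpow_lt_zpow_right₀ (by linarith : 1 < s) (by omega)
    linarith
  set Sr : ℝ := ((∑ j, (b j : ℤ) : ℤ) : ℝ) with hSr
  have key : ∀ j : Fin d, A + ((fl : ℝ) - ((b j : ℤ) : ℝ)) * (A - Bc) ≤ s ^ (-(b j : ℤ)) := by
    intro j
    have hb := one_add_int_mul_le_zpow s⁻¹ (inv_pos.mpr hs0) ((b j : ℤ) - fl)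
    have hinv : (s⁻¹) ^ ((b j : ℤ) - fl) = s ^ (fl - (b j : ℤ)) := by
      rw [inv_zpow, ← zpow_neg, neg_sub]
    rw [hinv] at hb
    have hmul := mul_le_mul_of_nonneg_right hb hApos.le
    have hr : s ^ (fl - (b j : ℤ)) * A = s ^ (-(b j : ℤ)) := by
      rw [hA, ← zpow_add₀ hs0.ne']
      congr 1; ring
    have hl : s⁻¹ * A = Bc := by
      rw [hA, hB, ← zpow_neg_one, ← zpow_add₀ hs0.ne']
      congr 1; ring
    rw [hr] at hmul
    refine le_trans (le_of_eq ?_) hmul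
    push_cast
    linear_combination ((fl:ℝ) - ((b j : ℕ) : ℝ)) * hl
  have hsum2 : (d:ℝ)*A + ((d : ℝ)*(fl:ℝ) - Sr) * (A - Bc) ≤ L := by
    have hdec : ∑ j : Fin d, (A + ((fl : ℝ) - ((b j : ℤ) : ℝ)) * (A - Bc))
        = (d:ℝ)*A + ((d : ℝ)*(fl:ℝ) - Sr) * (A - Bc) := by
      rw [Finset.sum_add_distrib, Finset.sum_const, Finset.card_univ, Fintype.card_fin,
        ← Finset.sum_mul]
      congr 1
      · simp [nsmul_eq_mul]
      · congr 1
        rw [Finset.sum_sub_distrib, Finset.sum_const, Finset.card_univ, Fintype.card_fin, hSr]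
        push_cast
        ring
    calc (d:ℝ)*A + ((d : ℝ)*(fl:ℝ) - Sr) * (A - Bc)
        = ∑ j : Fin d, (A + ((fl : ℝ) - ((b j : ℤ) : ℝ)) * (A - Bc)) := hdec.symm
      _ ≤ ∑ j, s ^ (-(b j : ℤ)) := Finset.sum_le_sum (fun j _ => key j)
      _ ≤ L := hsum
  have hflo : (L - (d:ℝ)*Bc)/(A - Bc) < (n₀ : ℝ) + 1 := by
    rw [hn₀]; exact Int.lt_floor_add_one _
  have h3 : L - (d:ℝ)*Bc < ((n₀:ℝ)+1)*(A - Bc) := (div_lt_iff₀ hDpos).mp hflo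
  have hSr_gt : (d:ℝ)*(fl:ℝ) + (d:ℝ) - (n₀:ℝ) - 1 < Sr := by
    by_contra hcon
    push_neg at hcon
    have h4 : 0 ≤ ((d:ℝ)*(fl:ℝ) + (d:ℝ) - (n₀:ℝ) - 1 - Sr) := by linarith
    nlinarith [mul_nonneg h4 hDpos.le]
  have hint : (d:ℤ)*fl + (d:ℤ) - n₀ - 1 < ∑ j, (b j : ℤ) := by
    have h5 := hSr_gt
    rw [hSr] at h5
    exact_mod_cast h5
  have : n₀ * fl + ((d : ℤ) - n₀) * (fl + 1) = (d:ℤ)*fl + (d:ℤ) - n₀ := by ring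
  omega

/-- The lower bound on the evaluation bandwidth (Theorem 2): every `B`-linear
weighted-sum evaluation scheme for the Reed–Solomon code on the distinct points
`β_1,…,β_ℓ,α_1,…,α_d` has bandwidth `∑_j b_j ≥ b_min`, where, with
`L = ((|F|-1)(ℓ+d-k-1)+d)/|F|` (and `log_{|B|}(d/L)` not an integer),
`n₀ = ⌊(L - d|B|^{-⌈log_{|B|}(d/L)⌉}) / (|B|^{-⌊log_{|B|}(d/L)⌋} - |B|^{-⌈log_{|B|}(d/L)⌉})⌋`
and `b_min = n₀⌊log_{|B|}(d/L)⌋ + (d - n₀)⌈log_{|B|}(d/L)⌉`. -/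
theorem weighted_sum_bandwidth_lower_bound {B F : Type*} [Field B] [Fintype B]
    [Field F] [Fintype F] [Algebra B F]
    (t : ℕ) (ht : Module.finrank B F = t)
    (ℓ d k : ℕ) (hℓ : 0 < ℓ) (hd : 0 < d) (hk : 0 < k)
    (hℓk : ℓ ≤ k) (hkℓd : k ≤ ℓ + d - 1)
    (β : Fin ℓ → F) (α : Fin d → F)
    (hinj : Function.Injective (Sum.elim β α))
    (κ : Fin ℓ → F) (hκ : ∀ i, κ i ≠ 0)
    (L : ℝ)
    (hL : L = (((Fintype.card F : ℝ) - 1) * ((ℓ : ℝ) + d - k - 1) + d) /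
      (Fintype.card F : ℝ))
    (hnotint : ¬ ∃ z : ℤ, Real.logb (Fintype.card B) ((d : ℝ) / L) = z)
    (fl cl n₀ : ℤ)
    (hfl : fl = ⌊Real.logb (Fintype.card B) ((d : ℝ) / L)⌋)
    (hcl : cl = ⌈Real.logb (Fintype.card B) ((d : ℝ) / L)⌉)
    (hn₀ : n₀ = ⌊(L - (d : ℝ) * (Fintype.card B : ℝ) ^ (-cl)) /
      ((Fintype.card B : ℝ) ^ (-fl) - (Fintype.card B : ℝ) ^ (-cl))⌋)
    (b : Fin d → ℕ)
    (g : (j : Fin d) → (F →ₗ[B] (Fin (b j) → B)))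
    (h : ((j : Fin d) → (Fin (b j) → B)) →ₗ[B] F)
    (hscheme : ∀ f : Polynomial F, f.degree < (k : WithBot ℕ) →
      h (fun j => g j (f.eval (α j))) = ∑ i, κ i * f.eval (β i)) :
    n₀ * fl + ((d : ℤ) - n₀) * cl ≤ ∑ j, (b j : ℤ) := by
  classical
  -- The ceiling is the floor plus one since the logarithm is not an integer.
  have hclfl : cl = fl + 1 := by
    rw [hcl, hfl]
    set x := Real.logb (Fintype.card B) ((d : ℝ) / L) with hx
    have h1 : ⌈x⌉ ≤ ⌊x⌋ + 1 := Int.ceil_le.mpr (by exact_mod_cast (Int.lt_floor_add_one x).le)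
    have h2 : ⌊x⌋ < ⌈x⌉ := by
      by_contra hcon
      push_neg at hcon
      have hx1 : x ≤ (⌊x⌋ : ℝ) := le_trans (Int.le_ceil x) (by exact_mod_cast hcon)
      exact hnotint ⟨⌊x⌋, le_antisymm hx1 (Int.floor_le x)⟩
    omega
  subst hclfl
  have hB2 : 1 < Fintype.card B := Fintype.one_lt_card
  have ht1 : 0 < t := ht ▸ Module.finrank_pos
  have hqcard : Fintype.card F = Fintype.card B ^ t := by rw [← ht]; exact Module.card_eq_pow_finrank
  -- ====== Part 1 : the scheme implies ∑_j |B|^{-b_j} ≤ L ======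
  have hsum : ∑ j, (Fintype.card B : ℝ) ^ (-(b j : ℤ)) ≤ L := by
    -- a nonzero B-linear functional on F and nondegeneracy of (c, y) ↦ φ (c * y)
    set bas := Module.finBasis B F with hbas
    set i0 : Fin (Module.finrank B F) := ⟨0, Module.finrank_pos⟩ with hi0
    set φ : F →ₗ[B] B := bas.coord i0 with hφ
    have hφ1 : φ (bas i0) = 1 := by simp [hφ]
    have hnd : ∀ y : F, (∀ c : F, φ (c * y) = 0) → y = 0 := by
      intro y hy
      by_contra hy0
      have hh := hy (bas i0 * y⁻¹)
      rw [mul_assoc, inv_mul_cancel₀ hy0, mul_one, hφ1] at hh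
      exact one_ne_zero hh
    -- the linear maps δ ↦ (y ↦ φ (δ * h (single j y)))
    set Θ : (j : Fin d) → (F →ₗ[B] ((Fin (b j) → B) →ₗ[B] B)) := fun j =>
      (LinearMap.lcomp B B (h ∘ₗ LinearMap.single B (fun j' => Fin (b j') → B) j)) ∘ₗ
        (LinearMap.llcomp B F F B φ) ∘ₗ (LinearMap.mul B F) with hΘdef
    have hΘ : ∀ (j) (δ : F) (y : Fin (b j) → B), Θ j δ y = φ (δ * h (Pi.single j y)) :=
      fun j δ y => rfl
    -- every functional is of the form x ↦ φ (γ * x)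
    have hsurj : ∀ ψ : F →ₗ[B] B, ∃ γ : F, ∀ xx : F, φ (γ * xx) = ψ xx := by
      set Φ : F →ₗ[B] (F →ₗ[B] B) :=
        (LinearMap.llcomp B F F B φ) ∘ₗ (LinearMap.mul B F) with hΦdef
      have hΦinj : Function.Injective Φ := by
        rw [← LinearMap.ker_eq_bot, LinearMap.ker_eq_bot']
        intro γ hγ
        refine hnd γ fun c => ?_
        have h0 : Φ γ c = 0 := by rw [hγ]; rfl
        rw [mul_comm]
        exact h0
      have hdim : Module.finrank B F = Module.finrank B (F →ₗ[B] B) := by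
        rw [Module.finrank_linearMap, Module.finrank_self, mul_one]
      have hΦsurj := (LinearMap.injective_iff_surjective_of_finrank_eq_finrank hdim).mp hΦinj
      intro ψ
      obtain ⟨γ, hγ⟩ := hΦsurj ψ
      exact ⟨γ, fun xx => by rw [← hγ]; rfl⟩
    -- the γ functions
    set γf : F → Fin d → F := fun δ j => Classical.choose (hsurj ((Θ j δ) ∘ₗ (g j))) with hγf
    have hγspec : ∀ (δ : F) (j) (xx : F),
        φ (γf δ j * xx) = φ (δ * h (Pi.single j (g j xx))) := by
      intro δ j xx
      have hspec := Classical.choose_spec (hsurj ((Θ j δ) ∘ₗ (g j))) xx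
      rw [hγf]
      rw [hspec]
      rfl
    have hγ0 : ∀ (j) (δ : F), δ ∈ LinearMap.ker (Θ j) → γf δ j = 0 := by
      intro j δ hδ
      refine hnd _ fun c => ?_
      rw [mul_comm c, hγspec δ j c]
      have h0 : Θ j δ = 0 := LinearMap.mem_ker.mp hδ
      have h1 : φ (δ * h (Pi.single j (g j c))) = (Θ j δ) (g j c) := rfl
      rw [h1, h0]
      rfl
    -- the key orthogonality relation (★)
    have hstar : ∀ (δ : F) (f : F[X]), f.degree < (k : WithBot ℕ) →
        δ * (∑ i, κ i * f.eval (β i)) = ∑ j, γf δ j * f.eval (α j) := by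
      intro δ f hf
      have key : ∀ c : F, φ (c * (δ * (∑ i, κ i * f.eval (β i))))
          = φ (c * (∑ j, γf δ j * f.eval (α j))) := by
        intro c
        have hdegCf : (C c * f).degree < (k : WithBot ℕ) :=
          lt_of_le_of_lt
            (calc (C c * f).degree ≤ (C c).degree + f.degree := degree_mul_le _ _
              _ ≤ 0 + f.degree := add_le_add degree_C_le le_rfl
              _ = f.degree := zero_add _) hf
        have hsch := hscheme (C c * f) hdegCf
        simp only [eval_mul, eval_C] at hsch
        have hdec : h (fun j => g j (c * f.eval (α j)))
            = ∑ j, h (Pi.single j (g j (c * f.eval (α j)))) := by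
          conv_lhs => rw [← Finset.univ_sum_single (fun j => g j (c * f.eval (α j)))]
          rw [map_sum]
        have e0 : ∑ i, κ i * (c * f.eval (β i)) = c * ∑ i, κ i * f.eval (β i) := by
          rw [Finset.mul_sum]
          exact Finset.sum_congr rfl fun i _ => by ring
        have e0' : ∑ j, γf δ j * (c * f.eval (α j)) = c * ∑ j, γf δ j * f.eval (α j) := by
          rw [Finset.mul_sum]
          exact Finset.sum_congr rfl fun j _ => by ring
        calc φ (c * (δ * (∑ i, κ i * f.eval (β i))))
            = φ (δ * (c * (∑ i, κ i * f.eval (β i)))) := by ring_nf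
          _ = φ (δ * ∑ i, κ i * (c * f.eval (β i))) := by rw [e0]
          _ = φ (δ * h (fun j => g j (c * f.eval (α j)))) := by rw [hsch]
          _ = φ (δ * ∑ j, h (Pi.single j (g j (c * f.eval (α j))))) := by rw [hdec]
          _ = φ (∑ j, δ * h (Pi.single j (g j (c * f.eval (α j))))) := by
              rw [Finset.mul_sum]
          _ = ∑ j, φ (δ * h (Pi.single j (g j (c * f.eval (α j))))) := map_sum φ _ _
          _ = ∑ j, φ (γf δ j * (c * f.eval (α j))) := by
              exact Finset.sum_congr rfl fun j _ => (hγspec δ j _).symm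
          _ = φ (∑ j, γf δ j * (c * f.eval (α j))) := (map_sum φ _ _).symm
          _ = φ (c * ∑ j, γf δ j * f.eval (α j)) := by rw [e0']
      have hy := hnd (δ * (∑ i, κ i * f.eval (β i)) - ∑ j, γf δ j * f.eval (α j))
        (fun c => by rw [mul_sub, map_sub, key, sub_self])
      exact sub_eq_zero.mp hy
    -- for δ ≠ 0 the dual polynomial has few roots among the α's
    have hcount : ∀ δ : F, δ ≠ 0 →
        ((Finset.univ.filter (fun j : Fin d => γf δ j = 0)).card ≤ ℓ + d - k - 1) := by
      intro δ hδ
      set w : (Fin ℓ ⊕ Fin d) → F := Sum.elim (fun i => δ * κ i) (fun j => -(γf δ j)) with hwdef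
      have hw : ∀ f : F[X], f.degree < (k : WithBot ℕ) →
          ∑ r, w r * f.eval (Sum.elim β α r) = 0 := by
        intro f hf
        rw [Fintype.sum_sum_type]
        simp only [hwdef, Sum.elim_inl, Sum.elim_inr]
        have e2 : ∑ i, (δ * κ i) * f.eval (β i) = δ * ∑ i, κ i * f.eval (β i) := by
          rw [Finset.mul_sum]
          exact Finset.sum_congr rfl fun i _ => by ring
        have e3 : ∑ j, (-(γf δ j)) * f.eval (α j) = -∑ j, γf δ j * f.eval (α j) := by
          rw [← Finset.sum_neg_distrib]
          exact Finset.sum_congr rfl fun j _ => by ring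
        rw [e2, e3, hstar δ f hf, add_neg_cancel]
      have hcardsum : Fintype.card (Fin ℓ ⊕ Fin d) = ℓ + d := by simp
      obtain ⟨u, hu_deg, hu_val⟩ := dual_complete (Sum.elim β α) hinj k hk
        (by rw [hcardsum]; omega) w hw
      rw [hcardsum] at hu_deg
      have hu0 : u ≠ 0 := by
        intro h0
        have hval := hu_val (Sum.inl ⟨0, hℓ⟩)
        rw [h0] at hval
        have h2 : δ * κ ⟨0, hℓ⟩ = 0 := by simpa [hwdef] using hval
        exact mul_ne_zero hδ (hκ _) h2
      have hnatdeg : u.natDegree < ℓ + d - k := (natDegree_lt_iff_degree_lt hu0).mpr hu_deg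
      refine le_trans (Finset.card_le_card_of_injOn (fun j => α j) ?mem ?inj)
        (le_trans (Multiset.toFinset_card_le _)
          (le_trans (Polynomial.card_roots' u) (by omega)))
      case mem =>
        intro j hj
        rw [Finset.mem_coe, Finset.mem_filter] at hj
        rw [Finset.mem_coe, Multiset.mem_toFinset, Polynomial.mem_roots hu0]
        have hval := hu_val (Sum.inr j)
        rw [hwdef] at hval
        simp only [Sum.elim_inr, hj.2, neg_zero] at hval
        have hnw : Lagrange.nodalWeight Finset.univ (Sum.elim β α) (Sum.inr j) ≠ 0 :=
          Lagrange.nodalWeight_ne_zero hinj.injOn (Finset.mem_univ _)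
        have := (mul_eq_zero.mp hval.symm).resolve_left hnw
        simpa [IsRoot] using this
      case inj =>
        intro j1 _ j2 _ he
        have h1 : Sum.elim β α (Sum.inr j1) = Sum.elim β α (Sum.inr j2) := by simpa using he
        simpa using hinj h1
    -- per-index kernel bound
    have hker_le : ∀ j : Fin d, Fintype.card B ^ (t - b j) ≤
        (((Finset.univ.erase (0:F)).filter (fun δ => γf δ j = 0)).card + 1) := by
      intro j
      letI : Fintype (LinearMap.ker (Θ j)) := Fintype.ofFinite _
      have hrk : Module.finrank B (LinearMap.range (Θ j)) +
          Module.finrank B (LinearMap.ker (Θ j)) = t := by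
        rw [← ht]; exact LinearMap.finrank_range_add_finrank_ker _
      have hrange : Module.finrank B (LinearMap.range (Θ j)) ≤ b j := by
        refine le_trans (Submodule.finrank_le _) ?_
        rw [Module.finrank_linearMap, Module.finrank_pi, Module.finrank_self, mul_one,
          Fintype.card_fin]
      have hkerrk : t - b j ≤ Module.finrank B (LinearMap.ker (Θ j)) := by omega
      have hcards : Fintype.card B ^ (t - b j) ≤ Fintype.card (LinearMap.ker (Θ j)) := by
        rw [Module.card_eq_pow_finrank (K := B) (V := LinearMap.ker (Θ j))]
        exact Nat.pow_le_pow_right hB2.le hkerrk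
      refine le_trans hcards ?_
      have h1 : Fintype.card (LinearMap.ker (Θ j)) ≤
          (Finset.univ.filter (fun δ : F => γf δ j = 0)).card := by
        have hinj1 : Function.Injective (fun z : LinearMap.ker (Θ j) =>
            (⟨z.1, hγ0 j z.1 z.2⟩ : {δ : F // γf δ j = 0})) := by
          intro a b hab
          apply Subtype.ext
          simpa using congrArg Subtype.val hab
        have hle := Fintype.card_le_of_injective _ hinj1
        rwa [Fintype.card_subtype (p := fun δ : F => γf δ j = 0)] at hle
      have h2 : (Finset.univ.filter (fun δ : F => γf δ j = 0)).card ≤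
          ((Finset.univ.erase (0:F)).filter (fun δ => γf δ j = 0)).card + 1 := by
        have hsub : Finset.univ.filter (fun δ : F => γf δ j = 0)
            ⊆ insert (0:F) (((Finset.univ.erase (0:F)).filter (fun δ => γf δ j = 0))) := by
          intro δ hδ
          rcases eq_or_ne δ 0 with rfl | hne
          · exact Finset.mem_insert_self _ _
          · exact Finset.mem_insert_of_mem (Finset.mem_filter.mpr
              ⟨Finset.mem_erase.mpr ⟨hne, Finset.mem_univ _⟩, (Finset.mem_filter.mp hδ).2⟩)
        exact le_trans (Finset.card_le_card hsub) (Finset.card_insert_le _ _)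
      omega
    -- double counting
    have main_nat : ∑ j : Fin d,
        ((Finset.univ.erase (0:F)).filter (fun δ => γf δ j = 0)).card
        ≤ (Fintype.card F - 1) * (ℓ + d - k - 1) := by
      have swap : ∑ j : Fin d, ((Finset.univ.erase (0:F)).filter (fun δ => γf δ j = 0)).card
          = ∑ δ ∈ Finset.univ.erase (0:F),
              (Finset.univ.filter (fun j : Fin d => γf δ j = 0)).card := by
        simp_rw [Finset.card_filter]
        exact Finset.sum_comm
      rw [swap]
      calc ∑ δ ∈ Finset.univ.erase (0:F),
            (Finset.univ.filter (fun j : Fin d => γf δ j = 0)).card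
          ≤ ∑ _δ ∈ Finset.univ.erase (0:F), (ℓ + d - k - 1) :=
            Finset.sum_le_sum fun δ hδ => hcount δ (Finset.ne_of_mem_erase hδ)
        _ = (Fintype.card F - 1) * (ℓ + d - k - 1) := by
            rw [Finset.sum_const, Finset.card_erase_of_mem (Finset.mem_univ 0),
              Finset.card_univ, smul_eq_mul]
    have hsum_nat : ∑ j : Fin d, Fintype.card B ^ (t - b j) ≤
        (Fintype.card F - 1) * (ℓ + d - k - 1) + d := by
      calc ∑ j : Fin d, Fintype.card B ^ (t - b j)
          ≤ ∑ j : Fin d,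
              (((Finset.univ.erase (0:F)).filter (fun δ => γf δ j = 0)).card + 1) :=
            Finset.sum_le_sum fun j _ => hker_le j
        _ = (∑ j : Fin d,
              ((Finset.univ.erase (0:F)).filter (fun δ => γf δ j = 0)).card) + d := by
            rw [Finset.sum_add_distrib, Finset.sum_const, Finset.card_univ, Fintype.card_fin,
              smul_eq_mul, mul_one]
        _ ≤ (Fintype.card F - 1) * (ℓ + d - k - 1) + d := by omega
    -- pass to the reals
    have hq0 : (0:ℝ) < (Fintype.card F : ℝ) := by
      exact_mod_cast Fintype.card_pos
    rw [hL, le_div_iff₀ hq0]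
    have hqr : (Fintype.card F : ℝ) = (Fintype.card B : ℝ) ^ (t:ℤ) := by
      rw [hqcard]
      push_cast
      rw [zpow_natCast]
    have hstep1 : (∑ j, (Fintype.card B : ℝ) ^ (-(b j : ℤ))) * (Fintype.card F : ℝ)
        = ∑ j : Fin d, (Fintype.card B : ℝ) ^ ((t:ℤ) - (b j : ℤ)) := by
      rw [Finset.sum_mul]
      refine Finset.sum_congr rfl fun j _ => ?_
      rw [hqr, ← zpow_add₀ (by positivity : (Fintype.card B : ℝ) ≠ 0)]
      congr 1
      ring
    have hstep2 : ∀ j : Fin d, (Fintype.card B : ℝ) ^ ((t:ℤ) - (b j : ℤ))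
        ≤ ((Fintype.card B ^ (t - b j) : ℕ) : ℝ) := by
      intro j
      have hcast : ((Fintype.card B ^ (t - b j) : ℕ) : ℝ)
          = (Fintype.card B : ℝ) ^ (((t - b j : ℕ)) : ℤ) := by
        push_cast
        rw [zpow_natCast]
      rw [hcast]
      refine zpow_le_zpow_right₀ ?_ ?_
      · exact_mod_cast hB2.le
      · omega
    have hcast2 : (ℓ : ℝ) + d - k - 1 = ((ℓ + d - k - 1 : ℕ) : ℝ) := by
      have hmk : (ℓ + d - k - 1) + k + 1 = ℓ + d := by omega
      have := congrArg (fun z : ℕ => (z : ℝ)) hmk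
      push_cast at this
      linarith
    calc (∑ j, (Fintype.card B : ℝ) ^ (-(b j : ℤ))) * (Fintype.card F : ℝ)
        = ∑ j : Fin d, (Fintype.card B : ℝ) ^ ((t:ℤ) - (b j : ℤ)) := hstep1
      _ ≤ ∑ j : Fin d, ((Fintype.card B ^ (t - b j) : ℕ) : ℝ) :=
          Finset.sum_le_sum fun j _ => hstep2 j
      _ = ((∑ j : Fin d, Fintype.card B ^ (t - b j) : ℕ) : ℝ) := by push_cast; rfl
      _ ≤ (((Fintype.card F - 1) * (ℓ + d - k - 1) + d : ℕ) : ℝ) := by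
          exact_mod_cast hsum_nat
      _ = ((Fintype.card F : ℝ) - 1) * ((ℓ : ℝ) + d - k - 1) + d := by
          rw [hcast2]
          have h1F : 1 ≤ Fintype.card F := Fintype.card_pos
          push_cast [Nat.cast_sub h1F]
          ring
  -- ====== Part 2 : integer optimization ======
  exact bandwidth_opt (Fintype.card B : ℝ) L (by exact_mod_cast hB2) fl n₀ b hn₀ hsum
end

section
/- Let B be a finite field, F a field extension of B of degree t, ℓ, d positive integers, C ⊆ F^{ℓ+d} an F-linear subspace, and κ_1, …, κ_ℓ ∈ F nonzero. Suppose C admits a B-linear (κ, C)-weighted-sum evaluation scheme with bandwidth b: there are B-linear maps g_j : F → B^{b_j} (j ∈ [d]) with ∑_{j=1}^d b_j = b, each b_j minimal for the map g_j (i.e., g_j is surjective onto B^{b_j}, equivalently no scheme with the same h-recovery uses fewer coordinates at node j), and a B-linear map h : B^{b_1} × ⋯ × B^{b_d} → F such that h(g_1(c_{ℓ+1}), …, g_d(c_{ℓ+d})) = ∑_{i=1}^ℓ κ_i c_i for every codeword c ∈ C. Then there exists a matrix M ∈ F^{(ℓ+d)×t} satisfying: (C1) for each column index m and every codeword c ∈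 C, ∑_{i=1}^{ℓ+d} M[i,m]·c_i = 0; (C2) (∏_{i≠1} κ_i)·M[1,:] = ⋯ = (∏_{i≠ℓ} κ_i)·M[ℓ,:], with the t entries of this common row linearly independent over B; (C3) ∑_{j=1}^d dim_B span_B{entries of row M[ℓ+j,:]} ≤ b. -/
open Finset

/-- Necessity direction of the characterization of `B`-linear evaluation schemes
(Theorem 6): a `B`-linear weighted-sum evaluation scheme with bandwidth `b = ∑_j b_j`
(with each `g_j` surjective, i.e. each `b_j` minimal) yields a `(κ, C)`-evaluation
matrix `M` satisfying (C1), (C2), and with total `B`-rank of its last `d` rows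
at most `b`. -/
theorem scheme_to_evaluation_matrix {B F : Type*} [Field B] [Fintype B]
    [Field F] [Algebra B F]
    (t : ℕ) (ht : Module.finrank B F = t)
    (ℓ d : ℕ) (hℓ : 0 < ℓ) (hd : 0 < d)
    (C : Submodule F ((Fin ℓ ⊕ Fin d) → F))
    (κ : Fin ℓ → F) (hκ : ∀ i, κ i ≠ 0)
    (b : Fin d → ℕ)
    (g : (j : Fin d) → (F →ₗ[B] (Fin (b j) → B)))
    (hg : ∀ j, Function.Surjective (g j))
    (h : ((j : Fin d) → (Fin (b j) → B)) →ₗ[B] F)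
    (hscheme : ∀ c ∈ C, h (fun j => g j (c (Sum.inr j))) = ∑ i, κ i * c (Sum.inl i)) :
    ∃ M : Fin ℓ ⊕ Fin d → Fin t → F,
      (∀ c ∈ C, ∀ m : Fin t, ∑ i : Fin ℓ ⊕ Fin d, M i m * c i = 0) ∧
      (∀ i i' : Fin ℓ, ∀ m : Fin t,
        (∏ i'' ∈ Finset.univ.erase i, κ i'') * M (Sum.inl i) m =
          (∏ i'' ∈ Finset.univ.erase i', κ i'') * M (Sum.inl i') m) ∧
      LinearIndependent B (fun m : Fin t =>
        (∏ i'' ∈ Finset.univ.erase (⟨0, hℓ⟩ : Fin ℓ), κ i'') * M (Sum.inl ⟨0, hℓ⟩) m) ∧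
      ∑ j : Fin d, Module.finrank B
          (Submodule.span B (Set.range fun m : Fin t => M (Sum.inr j) m))
        ≤ ∑ j, b j := by
  classical
  rcases Nat.eq_zero_or_pos t with ht0 | htpos
  · -- trivial case: `Fin t` is empty
    subst ht0
    refine ⟨fun _ _ => 0, fun c _ m => m.elim0, fun i i' m => m.elim0, ?_, ?_⟩
    · exact linearIndependent_empty_type
    · refine le_trans (le_of_eq (Finset.sum_eq_zero fun j _ => ?_)) (Nat.zero_le _)
      have h0 : (Set.range fun m : Fin 0 =>
          (fun (_ : Fin ℓ ⊕ Fin d) (_ : Fin 0) => (0 : F)) (Sum.inr j) m) = ∅ :=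
        Set.range_eq_empty _
      rw [h0, Submodule.span_empty]
      exact finrank_bot B F
  · -- main case
    haveI : FiniteDimensional B F := Module.finite_of_finrank_pos (ht ▸ htpos)
    haveI : Algebra.IsSeparable B F := inferInstance
    set Tr : F →ₗ[B] B := Algebra.trace B F with hTr
    have hnd : (Algebra.traceForm B F).Nondegenerate :=
      traceForm_nondegenerate B F
    set θ : Module.Basis (Fin t) B F := (Module.finBasis B F).reindex (finCongr ht) with hθ
    -- represent the coordinates of each `g j` by trace duality
    set u : (j : Fin d) → Fin (b j) → F := fun j k =>
      ((Algebra.traceForm B F).toDual hnd).symm ((LinearMap.proj k).comp (g j)) with hudef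
    have hu : ∀ (j : Fin d) (k : Fin (b j)) (α : F), Tr (u j k * α) = g j α k := by
      intro j k α
      have := LinearMap.BilinForm.apply_toDual_symm_apply
        (B := Algebra.traceForm B F) (hB := hnd) ((LinearMap.proj k).comp (g j)) α
      rwa [Algebra.traceForm_apply] at this
    -- decompose `h`
    set w : (j : Fin d) → Fin (b j) → F := fun j k =>
      h (Pi.single j (Pi.single k (1 : B))) with hwdef
    have hh : ∀ x : (j : Fin d) → Fin (b j) → B,
        h x = ∑ j, ∑ k, x j k • w j k := by
      intro x
      have hx : ∑ j, Pi.single j (x j) = x := Finset.univ_sum_single x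
      calc h x = h (∑ j, Pi.single j (x j)) := by rw [hx]
        _ = ∑ j, h (Pi.single j (x j)) := map_sum h _ _
        _ = ∑ j, ∑ k, x j k • w j k := by
            refine Finset.sum_congr rfl fun j _ => ?_
            have hcomp : h (Pi.single j (x j)) =
                (h.comp (LinearMap.single B _ j)) (x j) := rfl
            rw [hcomp, LinearMap.pi_apply_eq_sum_univ]
            refine Finset.sum_congr rfl fun k _ => ?_
            congr 1
            show h (LinearMap.single B _ j (fun n => if k = n then 1 else 0)) = w j k
            have : (fun n => if k = n then (1 : B) else 0) = Pi.single k 1 := by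
              funext n
              simp [Pi.single_apply, eq_comm]
            rw [this]
            rfl
    -- the key identity
    have key : ∀ c ∈ C, ∀ m : Fin t,
        θ m * (∑ i, κ i * c (Sum.inl i)) =
          ∑ j, (∑ k, Tr (θ m * w j k) • u j k) * c (Sum.inr j) := by
      intro c hc m
      rw [← sub_eq_zero]
      apply hnd.1
      intro α
      rw [Algebra.traceForm_apply, ← hTr]
      have hE : α * (∑ i, κ i * c (Sum.inl i)) =
          ∑ j, ∑ k, Tr (u j k * (α * c (Sum.inr j))) • w j k := by
        have hs := hscheme (α • c) (C.smul_mem α hc)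
        rw [hh] at hs
        simp only [Pi.smul_apply, smul_eq_mul] at hs
        have h1 : α * ∑ i, κ i * c (Sum.inl i) =
            ∑ i, κ i * (α * c (Sum.inl i)) := by
          rw [Finset.mul_sum]
          exact Finset.sum_congr rfl fun i _ => by ring
        rw [h1, ← hs]
        refine Finset.sum_congr rfl fun j _ => ?_
        refine Finset.sum_congr rfl fun k _ => ?_
        rw [hu]
      have lhs_eq : Tr (θ m * (∑ i, κ i * c (Sum.inl i)) * α) =
          ∑ j, ∑ k, Tr (u j k * (α * c (Sum.inr j))) * Tr (θ m * w j k) := by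
        have : θ m * (∑ i, κ i * c (Sum.inl i)) * α =
            θ m * (α * (∑ i, κ i * c (Sum.inl i))) := by ring
        rw [this, hE, Finset.mul_sum, map_sum]
        refine Finset.sum_congr rfl fun j _ => ?_
        rw [Finset.mul_sum, map_sum]
        refine Finset.sum_congr rfl fun k _ => ?_
        rw [mul_smul_comm, map_smul, smul_eq_mul]
      have rhs_eq : Tr ((∑ j, (∑ k, Tr (θ m * w j k) • u j k) * c (Sum.inr j)) * α) =
          ∑ j, ∑ k, Tr (u j k * (α * c (Sum.inr j))) * Tr (θ m * w j k) := by
        rw [Finset.sum_mul, map_sum]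
        refine Finset.sum_congr rfl fun j _ => ?_
        rw [Finset.sum_mul, Finset.sum_mul, map_sum]
        refine Finset.sum_congr rfl fun k _ => ?_
        rw [smul_mul_assoc, smul_mul_assoc, map_smul, smul_eq_mul, mul_comm]
        congr 2
        ring
      rw [sub_mul, map_sub, lhs_eq, rhs_eq, sub_self]
    -- the evaluation matrix
    refine ⟨Sum.elim (fun i m => κ i * θ m)
        (fun j m => - ∑ k, Tr (θ m * w j k) • u j k), ?_, ?_, ?_, ?_⟩
    · -- (C1)
      intro c hc m
      rw [Fintype.sum_sum_type]
      simp only [Sum.elim_inl, Sum.elim_inr]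
      have : ∑ i : Fin ℓ, (κ i * θ m) * c (Sum.inl i) =
          θ m * (∑ i, κ i * c (Sum.inl i)) := by
        rw [Finset.mul_sum]
        exact Finset.sum_congr rfl fun i _ => by ring
      rw [this, key c hc m]
      simp [neg_mul, Finset.sum_neg_distrib]
    · -- (C2)
      intro i i' m
      simp only [Sum.elim_inl]
      rw [← mul_assoc, ← mul_assoc, mul_comm _ (κ i), mul_comm _ (κ i'),
        Finset.mul_prod_erase _ _ (Finset.mem_univ i),
        Finset.mul_prod_erase _ _ (Finset.mem_univ i')]
    · -- linear independence
      have hP : (∏ i'' : Fin ℓ, κ i'') ≠ 0 :=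
        Finset.prod_ne_zero_iff.mpr fun i _ => hκ i
      have heq : (fun m : Fin t =>
          (∏ i'' ∈ Finset.univ.erase (⟨0, hℓ⟩ : Fin ℓ), κ i'') *
            (Sum.elim (fun i m => κ i * θ m)
              (fun j m => - ∑ k, Tr (θ m * w j k) • u j k) (Sum.inl ⟨0, hℓ⟩) m)) =
          (LinearMap.mulLeft B (∏ i'' : Fin ℓ, κ i'')) ∘ θ := by
        funext m
        simp only [Sum.elim_inl, Function.comp_apply, LinearMap.mulLeft_apply]
        rw [← mul_assoc, mul_comm _ (κ _),
          Finset.mul_prod_erase _ _ (Finset.mem_univ _)]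
      rw [heq]
      refine θ.linearIndependent.map' _ ?_
      rw [LinearMap.ker_eq_bot]
      exact fun x y hxy => mul_left_cancel₀ hP hxy
    · -- (C3)
      refine Finset.sum_le_sum fun j _ => ?_
      have hsub : Submodule.span B (Set.range fun m : Fin t =>
            Sum.elim (fun i m => κ i * θ m)
              (fun j m => - ∑ k, Tr (θ m * w j k) • u j k) (Sum.inr j) m) ≤
          Submodule.span B (Set.range (u j)) := by
        rw [Submodule.span_le]
        rintro _ ⟨m, rfl⟩
        simp only [Sum.elim_inr]
        refine neg_mem (Submodule.sum_mem _ fun k _ => ?_)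
        exact Submodule.smul_mem _ _ (Submodule.subset_span ⟨k, rfl⟩)
      calc Module.finrank B (Submodule.span B (Set.range fun m : Fin t =>
              Sum.elim (fun i m => κ i * θ m)
                (fun j m => - ∑ k, Tr (θ m * w j k) • u j k) (Sum.inr j) m))
          ≤ Module.finrank B (Submodule.span B (Set.range (u j))) :=
            Submodule.finrank_mono hsub
        _ ≤ Fintype.card (Fin (b j)) := finrank_range_le_card (u j)
        _ = b j := Fintype.card_fin _
end
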